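/- arXiv:2506.04896 — 8 statements merged into one kernel-verified Lean document; each statement's English description precedes it below -/
import Mathlib

section
/- For any bounded sequence (b_t) of real numbers, the Cesàro lower limit is at most the Abel lower limit, the Abel lower limit is at most the Abel upper limit, and the Abel upper limit is at most the Cesàro upper limit: liminf_{T→∞} (1/T)∑_{t=0}^{T-1} b_t ≤ liminf_{α↑1} (1−α)∑_{t=0}^∞ α^t b_t ≤ limsup_{α↑1} (1−α)∑_{t=0}^∞ α^t b_t ≤ limsup_{T→∞} (1/T)∑_{t=0}^{T-1} b_t. -/
open Filter Topology


-- core analytic lemma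
lemma abel_eventually_ge (b : ℕ → ℝ) (M : ℝ) (hb : ∀ t, |b t| ≤ M)
    (c ε : ℝ) (hε : 0 < ε) (N : ℕ)
    (hN : ∀ T, N ≤ T → c ≤ (∑ t ∈ Finset.range T, b t) / T) :
    ∀ᶠ α in nhdsWithin 1 (Set.Ico (0:ℝ) 1),
      c - ε ≤ (1 - α) * ∑' t : ℕ, α ^ t * b t := by
  set S : ℕ → ℝ := fun T => ∑ t ∈ Finset.range T, b t with hS
  have hM0 : 0 ≤ M := le_trans (abs_nonneg _) (hb 0)
  have hSbd : ∀ T, |S T| ≤ T * M := by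
    intro T
    calc |S T| ≤ ∑ t ∈ Finset.range T, |b t| := Finset.abs_sum_le_sum_abs _ _
    _ ≤ ∑ t ∈ Finset.range T, M := Finset.sum_le_sum fun t _ => hb t
    _ = T * M := by simp [mul_comm]
  set K : ℝ := (N : ℝ) ^ 2 * (M + |c|) with hK
  have hK0 : 0 ≤ K := by positivity
  have htend : Tendsto (fun α : ℝ => (1 - α) ^ 2 * K) (nhdsWithin 1 (Set.Ico (0:ℝ) 1)) (𝓝 0) := by
    have : Tendsto (fun α : ℝ => (1 - α) ^ 2 * K) (𝓝 1) (𝓝 ((1 - 1) ^ 2 * K)) := by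
      exact (Continuous.tendsto (by continuity) 1)
    simpa using this.mono_left nhdsWithin_le_nhds
  have hev : ∀ᶠ α in nhdsWithin 1 (Set.Ico (0:ℝ) 1), (1 - α) ^ 2 * K < ε :=
    htend.eventually_lt_const hε
  filter_upwards [hev, self_mem_nhdsWithin] with α hKε hα
  obtain ⟨hα0, hα1⟩ := hα
  have hα1' : |α| < 1 := by rw [abs_of_nonneg hα0]; exact hα1
  have h1α : 0 < 1 - α := by linarith
  -- summabilities
  have summb : Summable (fun t : ℕ => α ^ t * b t) := by
    apply Summable.of_norm_bounded (g := fun t => M * α ^ t)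
      ((summable_geometric_of_lt_one hα0 hα1).mul_left M)
    intro t
    rw [norm_mul, norm_pow, Real.norm_eq_abs, Real.norm_eq_abs, abs_of_nonneg hα0]
    calc α ^ t * |b t| ≤ α ^ t * M := by
          apply mul_le_mul_of_nonneg_left (hb t) (by positivity)
    _ = M * α ^ t := mul_comm _ _
  have summcoe : Summable (fun T : ℕ => ((T : ℝ) + 1) * α ^ T) := by
    have h1 : Summable (fun T : ℕ => (T : ℝ) * α ^ T) := by
      have := summable_pow_mul_geometric_of_norm_lt_one (R := ℝ) 1 (by simpa using hα1')
      simpa using this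
    simpa [add_mul] using h1.add (summable_geometric_of_lt_one hα0 hα1)
  have summS : ∀ k : ℕ, Summable (fun T : ℕ => α ^ T * S (T + k)) := by
    intro k
    apply Summable.of_norm_bounded
      (g := fun T : ℕ => ((M * k) * α ^ T) + (M * (((T:ℝ)+1) * α ^ T)))
      (((summable_geometric_of_lt_one hα0 hα1).mul_left _).add (summcoe.mul_left M))
    intro T
    rw [norm_mul, norm_pow, Real.norm_eq_abs, Real.norm_eq_abs, abs_of_nonneg hα0]
    have := hSbd (T + k)
    have hp : (0:ℝ) ≤ α ^ T := by positivity
    calc α ^ T * |S (T + k)| ≤ α ^ T * ((T + k : ℕ) * M) :=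
          mul_le_mul_of_nonneg_left (hSbd (T+k)) hp
    _ = M * k * α ^ T + M * (((T:ℝ)) * α ^ T) := by push_cast; ring
    _ ≤ M * k * α ^ T + M * (((T:ℝ)+1) * α ^ T) := by nlinarith [hp, hM0]
  -- Abel identity
  have summS0 : Summable (fun T : ℕ => α ^ T * S T) := by simpa using summS 0
  have hS0 : S 0 = 0 := by simp [hS]
  have hshift : ∑' T : ℕ, α ^ T * S T = α * ∑' T : ℕ, α ^ T * S (T + 1) := by
    rw [Summable.tsum_eq_zero_add summS0, hS0]
    rw [← tsum_mul_left]
    simp only [mul_zero, zero_add]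
    exact tsum_congr fun n => by ring
  have hident : ∑' t : ℕ, α ^ t * b t = (1 - α) * ∑' T : ℕ, α ^ T * S (T + 1) := by
    have hdiff : ∀ t : ℕ, α ^ t * b t = α ^ t * S (t + 1) - α ^ t * S t := by
      intro t
      rw [← mul_sub]
      congr 1
      simp [hS, Finset.sum_range_succ]
    calc ∑' t : ℕ, α ^ t * b t
        = ∑' t : ℕ, (α ^ t * S (t + 1) - α ^ t * S t) := by
          exact tsum_congr hdiff
    _ = (∑' t : ℕ, α ^ t * S (t + 1)) - ∑' t : ℕ, α ^ t * S t :=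
          Summable.tsum_sub (summS 1) summS0
    _ = (1 - α) * ∑' T : ℕ, α ^ T * S (T + 1) := by rw [hshift]; ring
  have hone : (1 - α) ^ 2 * ∑' T : ℕ, ((T : ℝ) + 1) * α ^ T = 1 := by
    have h1 : ∑' T : ℕ, (T : ℝ) * α ^ T = α / (1 - α) ^ 2 :=
      tsum_coe_mul_geometric_of_norm_lt_one (by simpa using hα1')
    have h2 : ∑' T : ℕ, α ^ T = (1 - α)⁻¹ := tsum_geometric_of_lt_one hα0 hα1
    have h3 : Summable (fun T : ℕ => (T : ℝ) * α ^ T) := by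
      have := summable_pow_mul_geometric_of_norm_lt_one (R := ℝ) 1 (by simpa using hα1')
      simpa using this
    have h4 : Summable (fun T : ℕ => α ^ T) := summable_geometric_of_lt_one hα0 hα1
    have : ∑' T : ℕ, ((T : ℝ) + 1) * α ^ T
        = (∑' T : ℕ, (T : ℝ) * α ^ T) + ∑' T : ℕ, α ^ T := by
      rw [← Summable.tsum_add h3 h4]
      exact tsum_congr fun T => by ring
    rw [this, h1, h2]
    field_simp
    ring
  -- the centered series
  set g : ℕ → ℝ := fun T => α ^ T * (S (T + 1) - ((T : ℝ) + 1) * c) with hg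
  have summg : Summable g := by
    have : g = fun T => α ^ T * S (T + 1) - c * (((T:ℝ)+1) * α ^ T) := by
      funext T; simp only [hg]; ring
    rw [this]
    exact (summS 1).sub (summcoe.mul_left c)
  have hgsum : (1 - α) * ∑' t : ℕ, α ^ t * b t - c = (1 - α) ^ 2 * ∑' T, g T := by
    have : ∑' T, g T = (∑' T : ℕ, α ^ T * S (T + 1)) - c * ∑' T : ℕ, ((T:ℝ)+1) * α ^ T := by
      rw [← tsum_mul_left, ← Summable.tsum_sub (summS 1) (summcoe.mul_left c)]
      exact tsum_congr fun T => by simp only [hg]; ring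
    rw [hident, this]
    rw [mul_sub]
    have : (1 - α) * ((1 - α) * ∑' (T : ℕ), α ^ T * S (T + 1)) =
        (1-α)^2 * ∑' (T : ℕ), α ^ T * S (T + 1) := by ring
    rw [← this]
    have h2 : (1 - α) ^ 2 * (c * ∑' (T : ℕ), ((T:ℝ) + 1) * α ^ T) = c := by
      rw [← mul_assoc, mul_comm ((1-α)^2) c, mul_assoc, hone, mul_one]
    nlinarith [h2]
  -- lower bound on ∑' g
  have hgtail : ∀ T : ℕ, 0 ≤ g (T + N) := by
    intro T
    have hTN : N ≤ T + N + 1 := by omega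
    have hc : c ≤ S (T + N + 1) / ((T + N + 1 : ℕ) : ℝ) := hN (T + N + 1) hTN
    have hpos : (0:ℝ) < ((T + N + 1 : ℕ) : ℝ) := by positivity
    have h2 : c * ((T + N + 1 : ℕ) : ℝ) ≤ S (T + N + 1) := (le_div_iff₀ hpos).mp hc
    have hcast : ((T + N : ℕ) : ℝ) + 1 = ((T + N + 1 : ℕ) : ℝ) := by push_cast; ring
    apply mul_nonneg (by positivity)
    rw [hcast]
    linarith
  have hghead : ∀ T ∈ Finset.range N, -((N:ℝ) * (M + |c|)) ≤ g T := by
    intro T hT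
    have hTN : T + 1 ≤ N := Finset.mem_range.mp hT
    have hα3 : α ^ T ≤ 1 := pow_le_one₀ hα0 (le_of_lt hα1)
    have hαp : (0:ℝ) ≤ α ^ T := by positivity
    have h1 : |S (T+1)| ≤ ((T:ℝ)+1) * M := by
      have := hSbd (T+1); push_cast at this ⊢; linarith
    have h2 : |g T| ≤ (N:ℝ) * (M + |c|) := by
      rw [hg]
      simp only
      rw [abs_mul, abs_pow, abs_of_nonneg hα0]
      have habs : |S (T + 1) - ((T:ℝ) + 1) * c| ≤ ((T:ℝ)+1) * M + ((T:ℝ)+1) * |c| := by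
        calc |S (T + 1) - ((T:ℝ) + 1) * c| ≤ |S (T+1)| + |((T:ℝ)+1) * c| := abs_sub _ _
        _ ≤ ((T:ℝ)+1) * M + ((T:ℝ)+1) * |c| := by
            rw [abs_mul, abs_of_nonneg (by positivity : (0:ℝ) ≤ (T:ℝ)+1)]
            exact add_le_add h1 le_rfl
      have hTN' : ((T:ℝ)+1) ≤ N := by exact_mod_cast hTN
      calc α ^ T * |S (T + 1) - ((T:ℝ) + 1) * c| ≤ 1 * (((T:ℝ)+1) * M + ((T:ℝ)+1) * |c|) :=
            mul_le_mul hα3 habs (abs_nonneg _) one_pos.le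
      _ = ((T:ℝ)+1) * (M + |c|) := by ring
      _ ≤ (N:ℝ) * (M + |c|) := by nlinarith [abs_nonneg c, hM0]
    linarith [neg_abs_le (g T), h2]
  have hgbound : -K ≤ ∑' T, g T := by
    rw [← Summable.sum_add_tsum_nat_add N summg]
    have ht : 0 ≤ ∑' T : ℕ, g (T + N) := tsum_nonneg hgtail
    have hh : -((N:ℝ) * ((N:ℝ) * (M + |c|))) ≤ ∑ T ∈ Finset.range N, g T := by
      calc -((N:ℝ) * ((N:ℝ) * (M + |c|))) = ∑ T ∈ Finset.range N, -((N:ℝ) * (M + |c|)) := by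
            simp [mul_assoc]
      _ ≤ ∑ T ∈ Finset.range N, g T := Finset.sum_le_sum hghead
    have : K = (N:ℝ) * ((N:ℝ) * (M + |c|)) := by rw [hK]; ring
    linarith
  -- conclude
  have h1α2 : (0:ℝ) ≤ (1 - α)^2 := by positivity
  have : (1 - α) * ∑' t : ℕ, α ^ t * b t - c ≥ -((1-α)^2 * K) := by
    rw [hgsum]
    nlinarith [hgbound, h1α2]
  linarith

lemma abel_abs_le (b : ℕ → ℝ) (M : ℝ) (hb : ∀ t, |b t| ≤ M) :
    ∀ α ∈ Set.Ico (0:ℝ) 1, |(1 - α) * ∑' t : ℕ, α ^ t * b t| ≤ M := by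
  rintro α ⟨hα0, hα1⟩
  have h1α : 0 < 1 - α := by linarith
  have hgeo : Summable (fun t : ℕ => α ^ t) := summable_geometric_of_lt_one hα0 hα1
  have hMgeo : Summable (fun t : ℕ => M * α ^ t) := hgeo.mul_left M
  have summb : Summable (fun t : ℕ => α ^ t * b t) := by
    apply Summable.of_norm_bounded (g := fun t => M * α ^ t) hMgeo
    intro t
    rw [norm_mul, norm_pow, Real.norm_eq_abs, Real.norm_eq_abs, abs_of_nonneg hα0]
    calc α ^ t * |b t| ≤ α ^ t * M :=
          mul_le_mul_of_nonneg_left (hb t) (by positivity)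
    _ = M * α ^ t := mul_comm _ _
  have h1 : ‖∑' t : ℕ, α ^ t * b t‖ ≤ ∑' t : ℕ, M * α ^ t := by
    apply tsum_of_norm_bounded hMgeo.hasSum
    intro t
    rw [norm_mul, norm_pow, Real.norm_eq_abs, Real.norm_eq_abs, abs_of_nonneg hα0]
    calc α ^ t * |b t| ≤ α ^ t * M :=
          mul_le_mul_of_nonneg_left (hb t) (by positivity)
    _ = M * α ^ t := mul_comm _ _
  have h2 : ∑' t : ℕ, M * α ^ t = M * (1 - α)⁻¹ := by
    rw [tsum_mul_left, tsum_geometric_of_lt_one hα0 hα1]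
  rw [abs_mul, abs_of_pos h1α]
  rw [Real.norm_eq_abs] at h1
  calc (1 - α) * |∑' t : ℕ, α ^ t * b t| ≤ (1 - α) * (M * (1 - α)⁻¹) := by
        apply mul_le_mul_of_nonneg_left _ h1α.le
        rw [← h2]; exact h1
  _ = M := by field_simp


/-- Tauberian inequalities: for a bounded real sequence, the Cesàro lower limit
is at most the Abel lower limit, which is at most the Abel upper limit, which is
at most the Cesàro upper limit. -/
theorem cesaro_abel_liminf_limsup
    (b : ℕ → ℝ) (M : ℝ) (hb : ∀ t, |b t| ≤ M) :
    liminf (fun T : ℕ => (∑ t ∈ Finset.range T, b t) / T) atTop ≤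
      liminf (fun α : ℝ => (1 - α) * ∑' t : ℕ, α ^ t * b t)
        (nhdsWithin 1 (Set.Ico (0 : ℝ) 1)) ∧
    liminf (fun α : ℝ => (1 - α) * ∑' t : ℕ, α ^ t * b t)
        (nhdsWithin 1 (Set.Ico (0 : ℝ) 1)) ≤
      limsup (fun α : ℝ => (1 - α) * ∑' t : ℕ, α ^ t * b t)
        (nhdsWithin 1 (Set.Ico (0 : ℝ) 1)) ∧
    limsup (fun α : ℝ => (1 - α) * ∑' t : ℕ, α ^ t * b t)
        (nhdsWithin 1 (Set.Ico (0 : ℝ) 1)) ≤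
      limsup (fun T : ℕ => (∑ t ∈ Finset.range T, b t) / T) atTop := by
  have hM0 : 0 ≤ M := le_trans (abs_nonneg _) (hb 0)
  set F := nhdsWithin (1:ℝ) (Set.Ico (0:ℝ) 1) with hF
  set f : ℝ → ℝ := fun α => (1 - α) * ∑' t : ℕ, α ^ t * b t with hf
  set A : ℕ → ℝ := fun T => (∑ t ∈ Finset.range T, b t) / T with hA
  haveI hne : F.NeBot := by
    rw [hF]
    apply mem_closure_iff_nhdsWithin_neBot.mp
    rw [closure_Ico (by norm_num : (0:ℝ) ≠ 1)]
    exact ⟨zero_le_one, le_refl 1⟩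
  have hAbd : ∀ T, |A T| ≤ M := by
    intro T
    rcases Nat.eq_zero_or_pos T with h | h
    · simp [hA, h, hM0]
    · have hTpos : (0:ℝ) < T := by exact_mod_cast h
      rw [hA]
      simp only
      rw [abs_div, abs_of_pos hTpos, div_le_iff₀ hTpos]
      calc |∑ t ∈ Finset.range T, b t| ≤ ∑ t ∈ Finset.range T, |b t| :=
            Finset.abs_sum_le_sum_abs _ _
      _ ≤ ∑ t ∈ Finset.range T, M := Finset.sum_le_sum fun t _ => hb t
      _ = M * T := by simp [mul_comm]
  have hmem : Set.Ico (0:ℝ) 1 ∈ F := hF ▸ self_mem_nhdsWithin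
  have hfb_le : IsBoundedUnder (· ≤ ·) F f := by
    refine ⟨M, eventually_map.mpr ?_⟩
    filter_upwards [hmem] with α hα
    exact (abs_le.mp (abel_abs_le b M hb α hα)).2
  have hfb_ge : IsBoundedUnder (· ≥ ·) F f := by
    refine ⟨-M, eventually_map.mpr ?_⟩
    filter_upwards [hmem] with α hα
    exact (abs_le.mp (abel_abs_le b M hb α hα)).1
  have hA_le : IsBoundedUnder (· ≤ ·) atTop A :=
    ⟨M, eventually_map.mpr <| Eventually.of_forall fun T : ℕ => (abs_le.mp (hAbd T)).2⟩
  have hA_ge : IsBoundedUnder (· ≥ ·) atTop A :=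
    ⟨-M, eventually_map.mpr <| Eventually.of_forall fun T : ℕ => (abs_le.mp (hAbd T)).1⟩
  refine ⟨?_, liminf_le_limsup hfb_le hfb_ge, ?_⟩
  · -- liminf A ≤ liminf f
    apply le_of_forall_lt_imp_le_of_dense
    intro c hc
    obtain ⟨c', hcc', hc'⟩ := exists_between hc
    have hev : ∀ᶠ T in atTop, c' < A T :=
      eventually_lt_of_lt_liminf hc' hA_ge
    obtain ⟨N, hN⟩ := eventually_atTop.mp hev
    have key := abel_eventually_ge b M hb c' (c' - c) (by linarith) N
      (fun T hT => (hN T hT).le)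
    have hev2 : ∀ᶠ α in F, c ≤ f α := by
      filter_upwards [key] with α hα
      simpa [hf] using le_trans (by linarith : c ≤ c' - (c' - c)) hα
    exact le_liminf_of_le (hfb_le.isCoboundedUnder_ge) hev2
  · -- limsup f ≤ limsup A
    apply le_of_forall_gt_imp_ge_of_dense
    intro c hc
    obtain ⟨c', hc', hcc'⟩ := exists_between hc
    have hev : ∀ᶠ T in atTop, A T < c' :=
      eventually_lt_of_limsup_lt hc' hA_le
    obtain ⟨N, hN⟩ := eventually_atTop.mp hev
    have hb' : ∀ t, |(fun t => -b t) t| ≤ M := fun t => by simpa using hb t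
    have hN' : ∀ T, N ≤ T → -c' ≤ (∑ t ∈ Finset.range T, (fun t => -b t) t) / (T:ℝ) := by
      intro T hT
      have := (hN T hT).le
      rw [Finset.sum_neg_distrib, neg_div]
      rw [hA] at this
      simp only at this
      linarith
    have key := abel_eventually_ge (fun t => -b t) M hb' (-c') (c - c') (by linarith) N hN'
    have hev2 : ∀ᶠ α in F, f α ≤ c := by
      filter_upwards [key] with α hα
      have hneg : ∑' t : ℕ, α ^ t * (-b t) = -∑' t : ℕ, α ^ t * b t := by
        simp [mul_neg, tsum_neg]
      rw [hneg] at hα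
      have : -c' - (c - c') ≤ -((1 - α) * ∑' t : ℕ, α ^ t * b t) := by
        rw [← mul_neg]; exact hα
      simp only [hf]
      linarith
    exact limsup_le_of_le (hfb_ge.isCoboundedUnder_le) hev2
end

section
/- (Berge maximum theorem, minimization form) Let U and V be metric spaces, F : U → 2^V an upper semicontinuous set-valued map with nonempty compact values, and f : U × V → ℝ lower semicontinuous. Then the value function f*(u) := min_{v ∈ F(u)} f(u,v) is well-defined and lower semicontinuous on U, and the solution multifunction F*(u) := {v ∈ F(u) : f(u,v) = f*(u)} has nonempty compact values. -/
open Set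

/-- A lower semicontinuous real function attains its minimum on a nonempty compact set. -/
lemma lsc_exists_min {V : Type*} [TopologicalSpace V] [T2Space V] {K : Set V} (hK : IsCompact K)
    (hne : K.Nonempty) {g : V → ℝ} (hg : LowerSemicontinuous g) :
    ∃ v ∈ K, ∀ w ∈ K, g v ≤ g w := by
  haveI : Nonempty K := hne.to_subtype
  set t : K → Set V := fun i => K ∩ {w | g w ≤ g i} with ht
  have htc : ∀ i, IsClosed (t i) := fun i =>
    (hK.isClosed.inter (hg.isClosed_preimage (g i)))
  have htcpt : ∀ i, IsCompact (t i) := fun i =>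
    hK.inter_right (hg.isClosed_preimage (g i))
  have htn : ∀ i, (t i).Nonempty := fun i => ⟨i, i.2, le_refl (g i)⟩
  have htd : Directed (· ⊇ ·) t := by
    intro i j
    rcases le_total (g i) (g j) with h | h
    · exact ⟨i, fun w hw => hw, fun w hw => ⟨hw.1, le_trans hw.2 h⟩⟩
    · exact ⟨j, fun w hw => ⟨hw.1, le_trans hw.2 h⟩, fun w hw => hw⟩
  obtain ⟨v, hv⟩ :=
    IsCompact.nonempty_iInter_of_directed_nonempty_isCompact_isClosed t htd htn htcpt htc
  simp only [mem_iInter] at hv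
  have hvK : v ∈ K := (hv (Classical.arbitrary K)).1
  exact ⟨v, hvK, fun w hw => (hv ⟨w, hw⟩).2⟩

/-- Berge's maximum theorem (minimization form): if `F` is an upper semicontinuous
compact-nonempty-valued multifunction and `f` is lower semicontinuous, then the value
function `f*` is well defined (the minimum is attained) and lower semicontinuous, and
the solution multifunction `F*` has nonempty compact values. -/
theorem berge_maximum_theorem_min
    (U V : Type*) [MetricSpace U] [MetricSpace V]
    (F : U → Set V)
    (hF_ne : ∀ u, (F u).Nonempty)
    (hF_cpt : ∀ u, IsCompact (F u))
    (hF_usc : ∀ u, ∀ G : Set V, IsOpen G → F u ⊆ G →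
      ∃ W ∈ nhds u, ∀ u' ∈ W, F u' ⊆ G)
    (f : U → V → ℝ)
    (hf : LowerSemicontinuous (fun q : U × V => f q.1 q.2)) :
    (∀ u, ∃ v ∈ F u, f u v = sInf ((fun v' => f u v') '' F u)) ∧
    LowerSemicontinuous (fun u => sInf ((fun v' => f u v') '' F u)) ∧
    (∀ u, ({v ∈ F u | f u v = sInf ((fun v' => f u v') '' F u)}).Nonempty ∧
      IsCompact {v ∈ F u | f u v = sInf ((fun v' => f u v') '' F u)}) := by
  -- lower semicontinuity of each partial function `f u ·`
  have hfu : ∀ u : U, LowerSemicontinuous (fun v => f u v) := by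
    intro u
    have hc : Continuous (fun v : V => ((u, v) : U × V)) :=
      (continuous_const.prodMk continuous_id)
    intro v c hcv
    have := hf (u, v) c hcv
    exact (hc.continuousAt).eventually this
  -- the minimum is attained and equals the infimum
  have key : ∀ u : U, ∃ v ∈ F u, (∀ w ∈ F u, f u v ≤ f u w) ∧
      f u v = sInf ((fun v' => f u v') '' F u) := by
    intro u
    obtain ⟨v, hvF, hvmin⟩ := lsc_exists_min (hF_cpt u) (hF_ne u) (hfu u)
    have hleast : IsLeast ((fun v' => f u v') '' F u) (f u v) :=
      ⟨mem_image_of_mem _ hvF, by rintro x ⟨w, hw, rfl⟩; exact hvmin w hw⟩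
    exact ⟨v, hvF, hvmin, (hleast.csInf_eq).symm⟩
  refine ⟨fun u => (key u).imp (fun v h => ⟨h.1, h.2.2⟩), ?_, ?_⟩
  · -- lower semicontinuity of the value function
    intro u c hc
    obtain ⟨v, hvF, hvmin, hveq⟩ := key u
    -- the set where `f > c` is open and contains `{u} ×ˢ F u`
    have hopen : IsOpen {q : U × V | c < f q.1 q.2} := hf.isOpen_preimage c
    have hsub : ({u} : Set U) ×ˢ F u ⊆ {q : U × V | c < f q.1 q.2} := by
      rintro ⟨u', w⟩ ⟨rfl, hw⟩
      exact lt_of_lt_of_le (lt_of_lt_of_le hc (le_of_eq hveq.symm)) (hvmin w hw)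
    obtain ⟨A, B, hAo, hBo, huA, hFB, hAB⟩ :=
      generalized_tube_lemma isCompact_singleton (hF_cpt u) hopen hsub
    obtain ⟨W, hW, hWsub⟩ := hF_usc u B hBo hFB
    have hA : A ∈ nhds u := hAo.mem_nhds (huA rfl)
    filter_upwards [hW, hA] with u' hu'W hu'A
    obtain ⟨v', hv'F, _, hv'eq⟩ := key u'
    rw [← hv'eq]
    exact hAB (Set.mk_mem_prod hu'A (hWsub u' hu'W hv'F))
  · -- the solution set is nonempty and compact
    intro u
    obtain ⟨v, hvF, hvmin, hveq⟩ := key u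
    refine ⟨⟨v, hvF, hveq⟩, ?_⟩
    have heq : {w ∈ F u | f u w = sInf ((fun v' => f u v') '' F u)} =
        F u ∩ {w | f u w ≤ sInf ((fun v' => f u v') '' F u)} := by
      ext w
      constructor
      · rintro ⟨hwF, hw⟩; exact ⟨hwF, le_of_eq hw⟩
      · rintro ⟨hwF, hw⟩
        exact ⟨hwF, le_antisymm hw (hveq ▸ hvmin w hwF)⟩
    rw [heq]
    exact (hF_cpt u).inter_right ((hfu u).isClosed_preimage _)
end

section
/- If U and V are metric spaces, A : U → 2^V is an upper semicontinuous set-valued map with nonempty compact values, and f : U × V → ℝ is lower semicontinuous and bounded below on Gr(A) = {(u,v) : v ∈ A(u)}, then f restricted to Gr(A) is K-inf-compact: for every compact K ⊆ U and λ ∈ ℝ, the set {(u,v) : u ∈ K, v ∈ A(u), f(u,v) ≤ λ} is compact. -/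
open Filter Topology

/-- If `A` is an upper semicontinuous multifunction with nonempty compact values and
`f` is lower semicontinuous and bounded below on the graph of `A`, then `f` restricted
to the graph of `A` is `K`-inf-compact. -/
theorem lsc_on_usc_graph_K_inf_compact
    (U V : Type*) [MetricSpace U] [MetricSpace V]
    (A : U → Set V)
    (hA_ne : ∀ u, (A u).Nonempty)
    (hA_cpt : ∀ u, IsCompact (A u))
    (hA_usc : ∀ u, ∀ G : Set V, IsOpen G → A u ⊆ G →
      ∃ W ∈ nhds u, ∀ u' ∈ W, A u' ⊆ G)
    (f : U → V → ℝ)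
    (hf_lsc : LowerSemicontinuousOn (fun q : U × V => f q.1 q.2)
      {q : U × V | q.2 ∈ A q.1})
    (m : ℝ) (hf_bdd : ∀ u, ∀ v ∈ A u, m ≤ f u v) :
    ∀ K : Set U, IsCompact K → ∀ l : ℝ,
      IsCompact {q : U × V | q.1 ∈ K ∧ q.2 ∈ A q.1 ∧ f q.1 q.2 ≤ l} := by
  intro K hK l
  have hseq : IsSeqCompact {q : U × V | q.1 ∈ K ∧ q.2 ∈ A q.1 ∧ f q.1 q.2 ≤ l} := by
    intro x hx
    obtain ⟨u, huK, φ, hφ, hφu⟩ := hK.tendsto_subseq (fun n => (hx n).1)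
    -- the distance of the second coordinates to A u tends to 0
    have hd : Tendsto (fun n => Metric.infDist (x (φ n)).2 (A u)) atTop (𝓝 0) := by
      rw [Metric.tendsto_atTop]
      intro ε hε
      obtain ⟨W, hW, hWG⟩ := hA_usc u {v | Metric.infDist v (A u) < ε}
        (isOpen_lt (Metric.continuous_infDist_pt _) continuous_const)
        (fun v hv => by simpa [Metric.infDist_zero_of_mem hv] using hε)
      have hmem : ∀ᶠ n in atTop, (x (φ n)).1 ∈ W := hφu.eventually_mem hW
      obtain ⟨N, hN⟩ := eventually_atTop.mp hmem
      refine ⟨N, fun n hn => ?_⟩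
      have h1 : (x (φ n)).2 ∈ A (x (φ n)).1 := (hx (φ n)).2.1
      have h2 : Metric.infDist (x (φ n)).2 (A u) < ε := hWG _ (hN n hn) h1
      rw [Real.dist_eq, sub_zero, abs_of_nonneg Metric.infDist_nonneg]
      exact h2
    -- approximate by points of A u
    have hw : ∀ n, ∃ w ∈ A u,
        dist (x (φ n)).2 w < Metric.infDist (x (φ n)).2 (A u) + 1 / (n + 1) := by
      intro n
      refine (Metric.infDist_lt_iff (hA_ne u)).mp ?_
      have : (0:ℝ) < 1 / (n + 1) := by positivity
      linarith
    choose w hwA hwd using hw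
    obtain ⟨v, hvA, ψ, hψ, hψv⟩ := (hA_cpt u).tendsto_subseq hwA
    -- second coordinates converge to v along φ ∘ ψ
    have hψat : Tendsto ψ atTop atTop := hψ.tendsto_atTop
    have hdist0 : Tendsto (fun n => dist (x (φ (ψ n))).2 v) atTop (𝓝 0) := by
      have hbound : ∀ n, dist (x (φ (ψ n))).2 v ≤
          (Metric.infDist (x (φ (ψ n))).2 (A u) + 1 / (ψ n + 1)) + dist (w (ψ n)) v := by
        intro n
        calc dist (x (φ (ψ n))).2 v ≤ dist (x (φ (ψ n))).2 (w (ψ n)) + dist (w (ψ n)) v :=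
              dist_triangle _ _ _
          _ ≤ _ := by have := hwd (ψ n); linarith
      have h1 : Tendsto (fun n => Metric.infDist (x (φ (ψ n))).2 (A u)) atTop (𝓝 0) :=
        hd.comp hψat
      have h2 : Tendsto (fun n : ℕ => (1 : ℝ) / (ψ n + 1)) atTop (𝓝 0) :=
        tendsto_one_div_add_atTop_nhds_zero_nat.comp hψat
      have h3 : Tendsto (fun n => dist (w (ψ n)) v) atTop (𝓝 0) :=
        tendsto_iff_dist_tendsto_zero.mp hψv
      have := ((h1.add h2).add h3)
      rw [show (0:ℝ) + 0 + 0 = 0 by ring] at this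
      exact squeeze_zero (fun n => dist_nonneg) hbound this
    have hv2 : Tendsto (fun n => (x (φ (ψ n))).2) atTop (𝓝 v) :=
      tendsto_iff_dist_tendsto_zero.mpr hdist0
    have hu2 : Tendsto (fun n => (x (φ (ψ n))).1) atTop (𝓝 u) := hφu.comp hψat
    have htend : Tendsto (fun n => x (φ (ψ n))) atTop (𝓝 (u, v)) := by
      rw [nhds_prod_eq]
      exact hu2.prodMk hv2
    -- f u v ≤ l
    have hfle : f u v ≤ l := by
      by_contra h
      have hev := hf_lsc (u, v) hvA l (lt_of_not_ge h)
      have htend' : Tendsto (fun n => x (φ (ψ n))) atTop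
          (𝓝[{q : U × V | q.2 ∈ A q.1}] (u, v)) :=
        tendsto_nhdsWithin_iff.mpr ⟨htend, Eventually.of_forall (fun n => (hx _).2.1)⟩
      have := (htend'.eventually hev).exists
      obtain ⟨n, hn⟩ := this
      exact absurd (hx (φ (ψ n))).2.2 (not_le.mpr hn)
    exact ⟨(u, v), ⟨huK, hvA, hfle⟩, φ ∘ ψ, hφ.comp hψ, htend⟩
  exact hseq.isCompact
end

section
/- A K-inf-compact function is lower semicontinuous: if U, V are metric spaces and f : U × V → ℝ is K-inf-compact on U × V (every sublevel set over a compact base in U is compact), then f is lower semicontinuous on U × V. -/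
/-- A `K`-inf-compact function on a product of metric spaces is lower
semicontinuous. -/
theorem K_inf_compact_lowerSemicontinuous
    (U V : Type*) [MetricSpace U] [MetricSpace V]
    (f : U × V → ℝ)
    (hf : ∀ K : Set U, IsCompact K → ∀ l : ℝ,
      IsCompact {q : U × V | q.1 ∈ K ∧ f q ≤ l}) :
    LowerSemicontinuous f := by
  rw [lowerSemicontinuous_iff_isClosed_preimage]
  intro l
  apply IsSeqClosed.isClosed
  intro x p hx hxp
  have hK : IsCompact (insert p.1 (Set.range fun n => (x n).1)) :=
    ((continuous_fst.tendsto p).comp hxp).isCompact_insert_range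
  have hC : IsClosed {q : U × V | q.1 ∈ insert p.1 (Set.range fun n => (x n).1) ∧ f q ≤ l} :=
    (hf _ hK l).isClosed
  have : p ∈ {q : U × V | q.1 ∈ insert p.1 (Set.range fun n => (x n).1) ∧ f q ≤ l} :=
    hC.isSeqClosed (fun n => ⟨Set.mem_insert_of_mem _ ⟨n, rfl⟩, hx n⟩) hxp
  exact this.2
end

section
/- If f : U × V → ℝ is K-inf-compact on U × V for metric spaces U and V, then the value function f*(u) := inf_{v ∈ V} f(u,v) is lower semicontinuous on U, and if f* is finite at u then the infimum is attained. -/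
/-- If `f` is `K`-inf-compact (and bounded below) on `U × V`, then the value function
`f*(u) = inf_v f(u,v)` is lower semicontinuous, and the infimum is attained whenever
it is finite (which holds since `V` is nonempty and `f` is bounded below). -/
theorem K_inf_compact_value_function
    (U V : Type*) [MetricSpace U] [MetricSpace V] [Nonempty V]
    (f : U → V → ℝ)
    (m : ℝ) (hf_bdd : ∀ u v, m ≤ f u v)
    (hf : ∀ K : Set U, IsCompact K → ∀ l : ℝ,
      IsCompact {q : U × V | q.1 ∈ K ∧ f q.1 q.2 ≤ l}) :
    LowerSemicontinuous (fun u => ⨅ v : V, f u v) ∧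
    ∀ u, ∃ v : V, f u v = ⨅ v' : V, f u v' := by
  have hbdd : ∀ u, BddBelow (Set.range (f u)) := fun u =>
    ⟨m, by rintro _ ⟨v, rfl⟩; exact hf_bdd u v⟩
  -- attainment
  have hatt : ∀ u, ∃ v : V, f u v = ⨅ v' : V, f u v' := by
    intro u
    set c : ℝ := ⨅ v' : V, f u v' with hc
    have hTc : ∀ l : ℝ, IsCompact {v : V | f u v ≤ l} := by
      intro l
      have h := (hf {u} isCompact_singleton l).image continuous_snd
      convert h using 1
      ext v
      constructor
      · intro hv; exact ⟨(u, v), ⟨rfl, hv⟩, rfl⟩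
      · rintro ⟨⟨u', v'⟩, ⟨hu', hfv⟩, rfl⟩
        simp only [Set.mem_singleton_iff] at hu'
        subst hu'; exact hfv
    set Z : ℕ → Set V := fun n => {v : V | f u v ≤ c + 1 / (n + 1)} with hZ
    have hmono : ∀ {i j : ℕ}, i ≤ j → Z j ⊆ Z i := by
      intro i j hij v hv
      refine le_trans hv (add_le_add (le_refl c) ?_)
      apply one_div_le_one_div_of_le
      · positivity
      · have : (i:ℝ) ≤ j := Nat.cast_le.mpr hij
        linarith
    have hne : ∀ n, (Z n).Nonempty := by
      intro n
      have hlt : c < c + 1 / (n + 1) := by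
        have : (0:ℝ) < 1 / (n + 1) := by positivity
        linarith
      obtain ⟨v, hv⟩ := exists_lt_of_ciInf_lt hlt
      exact ⟨v, le_of_lt hv⟩
    have hdir : Directed (fun x1 x2 => x1 ⊇ x2) Z := fun i j =>
      ⟨max i j, hmono (le_max_left i j), hmono (le_max_right i j)⟩
    obtain ⟨v, hv⟩ := IsCompact.nonempty_iInter_of_directed_nonempty_isCompact_isClosed
      Z hdir hne (fun n => hTc _) (fun n => (hTc _).isClosed)
    refine ⟨v, le_antisymm ?_ (ciInf_le (hbdd u) v)⟩
    refine le_of_forall_pos_le_add fun ε hε => ?_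
    obtain ⟨n, hn⟩ := exists_nat_one_div_lt hε
    have := Set.mem_iInter.mp hv n
    simp only [hZ, Set.mem_setOf_eq] at this
    linarith
  refine ⟨?_, hatt⟩
  -- lower semicontinuity
  rw [lowerSemicontinuous_iff_isClosed_preimage]
  intro l
  apply IsSeqClosed.isClosed
  intro x u hx hlim
  choose v hvmin using fun n => hatt (x n)
  have hmem : ∀ n, (x n, v n) ∈ {q : U × V |
      q.1 ∈ insert u (Set.range x) ∧ f q.1 q.2 ≤ l} := by
    intro n
    refine ⟨Set.mem_insert_of_mem _ ⟨n, rfl⟩, ?_⟩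
    rw [hvmin n]; exact hx n
  have hKcomp := hf _ hlim.isCompact_insert_range l
  obtain ⟨⟨u', w⟩, hq, φ, hφ, hconv⟩ := hKcomp.tendsto_subseq hmem
  have hu' : u' = u := by
    have h1 : Filter.Tendsto (fun k => x (φ k)) Filter.atTop (nhds u) :=
      hlim.comp hφ.tendsto_atTop
    have h2 : Filter.Tendsto (fun k => x (φ k)) Filter.atTop (nhds u') :=
      (continuous_fst.tendsto _).comp hconv
    exact tendsto_nhds_unique h2 h1
  have : f u w ≤ l := hu' ▸ hq.2
  exact le_trans (ciInf_le (hbdd u) w) this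
end

section
/- (Aumann's representation lemma) Let S₁ and S₂ be standard Borel spaces and κ a stochastic kernel on S₁ given S₂ (a measurable family of probability measures κ(·|s₂) on S₁). Then there exists a Borel measurable function φ : S₂ × [0,1] → S₁ such that κ(B|s₂) = Leb{ω ∈ [0,1] : φ(s₂,ω) ∈ B} for every Borel set B ⊆ S₁ and every s₂ ∈ S₂. -/
open MeasureTheory ProbabilityTheory Set Filter Topology

/-- Aumann's representation lemma: every stochastic kernel `κ` from a standard Borel
space `S₂` to a standard Borel space `S₁` is generated by a Borel function
`φ : S₂ × [0,1] → S₁` and the Lebesgue measure on `[0,1]`. -/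
theorem aumann_kernel_representation
    (S₁ S₂ : Type*) [MeasurableSpace S₁] [StandardBorelSpace S₁]
    [MeasurableSpace S₂] [StandardBorelSpace S₂]
    (κ : Kernel S₂ S₁) [IsMarkovKernel κ] :
    ∃ φ : S₂ × ℝ → S₁, Measurable φ ∧
      ∀ (s₂ : S₂) (B : Set S₁), MeasurableSet B →
        κ s₂ B = (volume.restrict (Set.Icc (0 : ℝ) 1)) {ω : ℝ | φ (s₂, ω) ∈ B} := by
  classical
  rcases isEmpty_or_nonempty S₂ with hS₂ | hS₂
  · exact ⟨fun p => (hS₂.false p.1).elim, measurable_of_empty _,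
      fun s => (hS₂.false s).elim⟩
  have hS₁ : Nonempty S₁ := by
    by_contra h
    rw [not_nonempty_iff] at h
    have h1 : (κ (Classical.arbitrary S₂)) Set.univ = 1 := measure_univ
    rw [Set.univ_eq_empty_iff.mpr h] at h1
    simp at h1
  obtain ⟨f, hf⟩ := exists_measurableEmbedding_real S₁
  set g : ℝ → S₁ := Function.extend f id (fun _ => Classical.arbitrary S₁) with hg_def
  have hg : Measurable g := hf.measurable_extend measurable_id measurable_const
  have hgf : ∀ a, g (f a) = a := fun a => by
    simp only [hg_def, hf.injective.extend_apply, id]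
  set ν : S₂ → Measure ℝ := fun s => (κ s).map f with hν_def
  have hν : ∀ s, IsProbabilityMeasure (ν s) := fun s =>
    Measure.isProbabilityMeasure_map hf.measurable.aemeasurable
  set F : S₂ → ℝ → ℝ := fun s => cdf (ν s) with hF_def
  have hFeq : ∀ s x, F s x = (κ s (f ⁻¹' Iic x)).toReal := by
    intro s x
    have h1 : F s x = (ν s (Iic x)).toReal := @cdf_eq_real (ν s) (hν s) x
    rw [h1, hν_def, Measure.map_apply hf.measurable measurableSet_Iic]
  have hFmeas : ∀ x : ℝ, Measurable fun s => F s x := by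
    intro x
    simp_rw [hFeq]
    exact (κ.measurable_coe (hf.measurable measurableSet_Iic)).ennreal_toReal
  have hFmono : ∀ s, Monotone (F s) := fun s => (cdf (ν s)).mono
  set Q : S₂ × ℝ → EReal :=
    fun p => ⨅ q : ℚ, if p.2 ≤ F p.1 q then ((q : ℝ) : EReal) else ⊤ with hQ_def
  have hQmeas : Measurable Q := by
    refine Measurable.iInf fun q => Measurable.ite ?_ measurable_const measurable_const
    exact measurableSet_le measurable_snd ((hFmeas q).comp measurable_fst)
  set φ₀ : S₂ × ℝ → ℝ := fun p => (Q p).toReal with hφ₀_def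
  have hφ₀meas : Measurable φ₀ := hQmeas.ereal_toReal
  -- key property of the quantile function
  have key : ∀ s : S₂, ∀ u ∈ Ioo (0:ℝ) 1, ∀ x : ℝ, (φ₀ (s, u) ≤ x ↔ u ≤ F s x) := by
    intro s u hu x
    haveI := hν s
    -- the index set is nonempty
    obtain ⟨x₀, hx₀⟩ : ∃ x₀ : ℝ, u < F s x₀ := by
      have h := (tendsto_cdf_atTop (μ := ν s)).eventually (eventually_gt_nhds hu.2)
      exact h.exists
    obtain ⟨q₀, hq₀⟩ := exists_rat_gt x₀
    have hq₀' : u ≤ F s q₀ := hx₀.le.trans (hFmono s hq₀.le)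
    -- lower bound
    obtain ⟨x₁, hx₁⟩ : ∃ x₁ : ℝ, F s x₁ < u := by
      have h := (tendsto_cdf_atBot (μ := ν s)).eventually (eventually_lt_nhds hu.1)
      exact h.exists
    have hQ_le : Q (s, u) ≤ ((q₀ : ℝ) : EReal) := by
      refine (iInf_le _ q₀).trans ?_
      rw [if_pos hq₀']
    have hQ_ge : ((x₁ : ℝ) : EReal) ≤ Q (s, u) := by
      refine le_iInf fun q => ?_
      by_cases hc : u ≤ F s q
      · rw [if_pos hc]
        have hx₁q : x₁ ≤ (q : ℝ) := by
          by_contra hlt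
          exact absurd (hc.trans (hFmono s (not_le.mp hlt).le)) (not_le.mpr hx₁)
        exact_mod_cast hx₁q
      · rw [if_neg hc]; exact le_top
    have hne_top : Q (s, u) ≠ ⊤ := (hQ_le.trans_lt (EReal.coe_lt_top _)).ne
    have hne_bot : Q (s, u) ≠ ⊥ :=
      fun h => absurd (h ▸ hQ_ge) (by simp)
    have hQr : Q (s, u) = ((φ₀ (s, u) : ℝ) : EReal) := (EReal.coe_toReal hne_top hne_bot).symm
    set r : ℝ := φ₀ (s, u) with hr_def
    -- u ≤ F s y for all y > r
    have hgt : ∀ y : ℝ, r < y → u ≤ F s y := by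
      intro y hy
      have h1 : Q (s, u) < ((y : ℝ) : EReal) := by
        rw [hQr]; exact_mod_cast hy
      rw [hQ_def, iInf_lt_iff] at h1
      obtain ⟨q, hq⟩ := h1
      by_cases hc : u ≤ F s q
      · rw [if_pos hc] at hq
        have : (q : ℝ) ≤ y := le_of_lt (by exact_mod_cast hq)
        exact hc.trans (hFmono s this)
      · rw [if_neg hc] at hq
        exact absurd hq (by simp)
    -- right continuity gives u ≤ F s r
    have hur : u ≤ F s r := by
      have hcont : ContinuousWithinAt (F s) (Ioi r) r :=
        ((cdf (ν s)).right_continuous r).mono Ioi_subset_Ici_self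
      refine ge_of_tendsto hcont ?_
      exact eventually_nhdsWithin_of_forall fun y hy => hgt y hy
    constructor
    · intro hrx
      exact hur.trans (hFmono s hrx)
    · intro hux
      refine le_of_forall_pos_le_add fun ε hε => ?_
      obtain ⟨q, hq1, hq2⟩ := exists_rat_btwn (lt_add_of_pos_right x hε)
      have hc : u ≤ F s q := hux.trans (hFmono s hq1.le)
      have : Q (s, u) ≤ ((q : ℝ) : EReal) := by
        refine (iInf_le _ q).trans ?_
        rw [if_pos hc]
      rw [hQr] at this
      have hrq : r ≤ (q : ℝ) := by exact_mod_cast this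
      exact hrq.trans hq2.le
  -- the pushforward of Lebesgue under the quantile is ν s
  have hmap : ∀ s : S₂,
      Measure.map (fun u => φ₀ (s, u)) (volume.restrict (Ioo (0:ℝ) 1)) = ν s := by
    intro s
    haveI := hν s
    have hm : Measurable fun u => φ₀ (s, u) := hφ₀meas.comp measurable_prodMk_left
    haveI : IsFiniteMeasure
        (Measure.map (fun u => φ₀ (s, u)) (volume.restrict (Ioo (0:ℝ) 1))) := by
      constructor
      rw [Measure.map_apply hm MeasurableSet.univ]
      simp [Real.volume_Ioo]
    refine Measure.ext_of_Iic _ _ fun x => ?_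
    rw [Measure.map_apply hm measurableSet_Iic,
      Measure.restrict_apply (hm measurableSet_Iic)]
    set c : ℝ := F s x with hc_def
    have hc0 : 0 ≤ c := cdf_nonneg _ _
    have hc1 : c ≤ 1 := cdf_le_one _ _
    have hsub1 : Ioo (0:ℝ) c ⊆ (fun u => φ₀ (s, u)) ⁻¹' Iic x ∩ Ioo 0 1 := by
      intro u hu
      have hu01 : u ∈ Ioo (0:ℝ) 1 := ⟨hu.1, hu.2.trans_le hc1⟩
      exact ⟨(key s u hu01 x).mpr hu.2.le, hu01⟩
    have hsub2 : (fun u => φ₀ (s, u)) ⁻¹' Iic x ∩ Ioo 0 1 ⊆ Ioc (0:ℝ) c := by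
      intro u hu
      exact ⟨hu.2.1, (key s u hu.2 x).mp hu.1⟩
    have hvol : volume ((fun u => φ₀ (s, u)) ⁻¹' Iic x ∩ Ioo 0 1) = ENNReal.ofReal c := by
      refine le_antisymm ?_ ?_
      · refine (measure_mono hsub2).trans_eq ?_
        rw [Real.volume_Ioc, sub_zero]
      · refine le_trans ?_ (measure_mono hsub1)
        rw [Real.volume_Ioo, sub_zero]
    rw [hvol, ofReal_cdf]
  -- conclusion
  refine ⟨fun p => g (φ₀ p), hg.comp hφ₀meas, fun s B hB => ?_⟩
  have hm : Measurable fun u => φ₀ (s, u) := hφ₀meas.comp measurable_prodMk_left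
  have hfB : MeasurableSet (f '' B) := hf.measurableSet_image.2 hB
  have h1 : κ s B = ν s (f '' B) := by
    rw [hν_def, Measure.map_apply hf.measurable hfB, hf.injective.preimage_image]
  have h2 : ν s (f '' B)
      = volume.restrict (Ioo (0:ℝ) 1) ((fun u => φ₀ (s, u)) ⁻¹' (f '' B)) := by
    rw [← hmap s, Measure.map_apply hm hfB]
  have hnull : volume.restrict (Ioo (0:ℝ) 1)
      ((fun u => φ₀ (s, u)) ⁻¹' (range f)ᶜ) = 0 := by
    rw [← Measure.map_apply hm hf.measurableSet_range.compl, hmap s,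
      hν_def, Measure.map_apply hf.measurable hf.measurableSet_range.compl]
    simp
  have hAC : volume.restrict (Ioo (0:ℝ) 1) {ω : ℝ | g (φ₀ (s, ω)) ∈ B}
      = volume.restrict (Ioo (0:ℝ) 1) ((fun u => φ₀ (s, u)) ⁻¹' (f '' B)) := by
    refine le_antisymm ?_ ?_
    · have hsub : {ω : ℝ | g (φ₀ (s, ω)) ∈ B}
          ⊆ ((fun u => φ₀ (s, u)) ⁻¹' (f '' B))
            ∪ ((fun u => φ₀ (s, u)) ⁻¹' (range f)ᶜ) := by
        intro u hu
        by_cases hr : φ₀ (s, u) ∈ range f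
        · obtain ⟨a, ha⟩ := hr
          left
          have hu' : g (φ₀ (s, u)) ∈ B := hu
          rw [← ha, hgf a] at hu'
          exact ⟨a, hu', ha⟩
        · right; exact hr
      refine (measure_mono hsub).trans ?_
      refine (measure_union_le _ _).trans ?_
      rw [hnull, add_zero]
    · refine measure_mono fun u hu => ?_
      obtain ⟨a, haB, ha⟩ := hu
      have ha' : f a = φ₀ (s, u) := ha
      show g (φ₀ (s, u)) ∈ B
      rw [← ha', hgf a]
      exact haB
  calc κ s B = volume.restrict (Ioo (0:ℝ) 1) {ω : ℝ | g (φ₀ (s, ω)) ∈ B} := by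
        rw [h1, h2, hAC]
    _ = volume.restrict (Icc (0:ℝ) 1) {ω : ℝ | g (φ₀ (s, ω)) ∈ B} := by
        rw [MeasureTheory.restrict_Ioo_eq_restrict_Icc]
end

section
/- (Continuity in total variation for multiplicative noise) Let f : S₂ → ℝⁿ be continuous with fⱼ(s₂) ≠ 0 for all s₂ ∈ S₂ and all coordinates j = 1,…,n, where S₂ is a metric space, and let p be a probability measure on ℝⁿ absolutely continuous with respect to Lebesgue measure. Then the kernel κ(B|s₂) := p{ξ ∈ ℝⁿ : diag(ξ) f(s₂) ∈ B}, i.e., the distribution of the coordinatewise product (ξ₁ f₁(s₂), …, ξₙ fₙ(s₂)), is continuous in total variation in s₂. -/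
open MeasureTheory Filter

lemma diag_map_volume {n : ℕ} (a : Fin n → ℝ) (ha : ∀ j, a j ≠ 0) :
    (volume : Measure (Fin n → ℝ)).map (fun x => fun j => a j * x j)
      = ENNReal.ofReal |(∏ j, a j)⁻¹| • volume := by
  classical
  have hL : (fun x => fun j => a j * x j) = ⇑(Matrix.toLin' (Matrix.diagonal a)) := by
    funext x
    funext j
    simp [Matrix.toLin'_apply, Matrix.mulVec_diagonal]
  have hdet : LinearMap.det (Matrix.toLin' (Matrix.diagonal a)) = ∏ j, a j := by
    rw [LinearMap.det_toLin', Matrix.det_diagonal]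
  have hdet0 : LinearMap.det (Matrix.toLin' (Matrix.diagonal a)) ≠ 0 := by
    rw [hdet]; exact Finset.prod_ne_zero_iff.2 fun j _ => ha j
  rw [hL, Real.map_linearMap_volume_pi_eq_smul_volume_pi hdet0, hdet]

lemma diag_measurable {n : ℕ} (a : Fin n → ℝ) :
    Measurable (fun (x : Fin n → ℝ) => fun j => a j * x j) :=
  (continuous_pi fun j => continuous_const.mul (continuous_apply j)).measurable

lemma div_eq_diag {n : ℕ} (a : Fin n → ℝ) :
    (fun (y : Fin n → ℝ) => fun j => y j / a j) = (fun y => fun j => (a j)⁻¹ * y j) := by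
  funext y j; rw [div_eq_inv_mul]

lemma diagmap_ac {n : ℕ} (a : Fin n → ℝ) (ha : ∀ j, a j ≠ 0) :
    (volume : Measure (Fin n → ℝ)).map (fun x => fun j => a j * x j) ≪ volume := by
  rw [diag_map_volume a ha]
  exact MeasureTheory.Measure.smul_absolutelyContinuous

lemma comp_diag_aesm {n : ℕ} (a : Fin n → ℝ) (ha : ∀ j, a j ≠ 0)
    {u : (Fin n → ℝ) → ℝ} (hu : AEStronglyMeasurable u volume) :
    AEStronglyMeasurable (fun (y : Fin n → ℝ) => u (fun j => a j * y j)) volume :=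
  (hu.mono_ac (diagmap_ac a ha)).comp_aemeasurable (diag_measurable a).aemeasurable

lemma scale_integral {n : ℕ} (a : Fin n → ℝ) (ha : ∀ j, a j ≠ 0)
    (u : (Fin n → ℝ) → ℝ) (hu : AEStronglyMeasurable u volume) :
    ∫ y : Fin n → ℝ, (∏ j, |a j|)⁻¹ * u (fun j => y j / a j) = ∫ x, u x := by
  have hainv : ∀ j, (a j)⁻¹ ≠ 0 := fun j => inv_ne_zero (ha j)
  have hv : AEStronglyMeasurable (fun (y : Fin n → ℝ) => u (fun j => (a j)⁻¹ * y j)) volume :=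
    comp_diag_aesm _ hainv hu
  have hfm : AEStronglyMeasurable (fun (y : Fin n → ℝ) => u (fun j => (a j)⁻¹ * y j))
      ((volume : Measure (Fin n → ℝ)).map (fun x => fun j => a j * x j)) :=
    hv.mono_ac (diagmap_ac a ha)
  have key := integral_map (μ := (volume : Measure (Fin n → ℝ)))
    (φ := fun x => fun j => a j * x j) (diag_measurable a).aemeasurable hfm
  have hcan : ∀ x : Fin n → ℝ, (fun j => (a j)⁻¹ * ((fun k => a k * x k) j)) = x := by
    intro x; funext j; simp only []; rw [inv_mul_eq_div, mul_div_cancel_left₀ _ (ha j)]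
  rw [diag_map_volume a ha, integral_smul_measure] at key
  simp only [hcan] at key
  simp only [div_eq_inv_mul]
  rw [MeasureTheory.integral_const_mul]
  have habs : |(∏ j, a j)⁻¹| = (∏ j, |a j|)⁻¹ := by
    rw [abs_inv, Finset.abs_prod]
  have hpos : (0:ℝ) < ∏ j, |a j| :=
    Finset.prod_pos fun j _ => abs_pos.2 (ha j)
  rw [ENNReal.toReal_ofReal (abs_nonneg _), habs, smul_eq_mul] at key
  exact key

lemma scale_integrable {n : ℕ} (a : Fin n → ℝ) (ha : ∀ j, a j ≠ 0)
    {u : (Fin n → ℝ) → ℝ} (hu : Integrable u volume) :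
    Integrable (fun (y : Fin n → ℝ) => (∏ j, |a j|)⁻¹ * u (fun j => y j / a j)) volume := by
  have hainv : ∀ j, (a j)⁻¹ ≠ 0 := fun j => inv_ne_zero (ha j)
  simp only [div_eq_inv_mul]
  refine Integrable.const_mul ?_ _
  have h1 : Integrable u ((volume : Measure (Fin n → ℝ)).map
      (fun x => fun j => (a j)⁻¹ * x j)) := by
    rw [diag_map_volume _ hainv]
    exact hu.smul_measure ENNReal.ofReal_ne_top
  exact (integrable_map_measure (hu.aestronglyMeasurable.mono_ac (diagmap_ac _ hainv))
    (diag_measurable _).aemeasurable).mp h1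

lemma mulT_measurable {n : ℕ} (a : Fin n → ℝ) :
    Measurable (fun (ξ : Fin n → ℝ) => fun j => ξ j * a j) :=
  (continuous_pi fun j => (continuous_apply j).mul continuous_const).measurable

lemma map_apply_eq_integral {n : ℕ} (p : Measure (Fin n → ℝ)) [IsProbabilityMeasure p]
    (hp : p ≪ (volume : Measure (Fin n → ℝ)))
    (a : Fin n → ℝ) (ha : ∀ j, a j ≠ 0) (B : Set (Fin n → ℝ)) (hB : MeasurableSet B) :
    ((p.map (fun ξ => fun j => ξ j * a j)) B).toReal
      = ∫ y in B, (∏ j, |a j|)⁻¹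
          * (p.rnDeriv volume (fun j => y j / a j)).toReal ∂volume := by
  set g₀ : (Fin n → ℝ) → ℝ := fun x => (p.rnDeriv volume x).toReal with hg₀
  have hg₀m : Measurable g₀ := (Measure.measurable_rnDeriv p volume).ennreal_toReal
  set T : (Fin n → ℝ) → (Fin n → ℝ) := fun ξ => fun j => ξ j * a j with hT
  have hTm : Measurable T := mulT_measurable a
  have hpre : MeasurableSet (T ⁻¹' B) := hTm hB
  set u : (Fin n → ℝ) → ℝ := Set.indicator (T ⁻¹' B) g₀ with hu
  have hum : Measurable u := hg₀m.indicator hpre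
  have h1 : ((p.map T) B).toReal = ∫ x in T ⁻¹' B, g₀ x ∂volume := by
    rw [Measure.map_apply hTm hB]; exact (Measure.setIntegral_toReal_rnDeriv hp (T ⁻¹' B)).symm
  have h2 : ∫ x in T ⁻¹' B, g₀ x ∂volume = ∫ x, u x ∂volume := by
    rw [hu, MeasureTheory.integral_indicator hpre]
  have h3 := scale_integral a ha u hum.aestronglyMeasurable
  have h4 : ∀ y : Fin n → ℝ, (∏ j, |a j|)⁻¹ * u (fun j => y j / a j)
      = Set.indicator B (fun y => (∏ j, |a j|)⁻¹ * g₀ (fun j => y j / a j)) y := by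
    intro y
    have hmem : (fun j => y j / a j) ∈ T ⁻¹' B ↔ y ∈ B := by
      have : T (fun j => y j / a j) = y := by
        funext j
        exact div_mul_cancel₀ _ (ha j)
      simp [Set.mem_preimage, this]
    by_cases hy : y ∈ B
    · rw [Set.indicator_of_mem hy, hu, Set.indicator_of_mem (hmem.2 hy)]
    · rw [Set.indicator_of_notMem hy, hu, Set.indicator_of_notMem (fun hc => hy (hmem.1 hc)),
        mul_zero]
  rw [h1, h2, ← h3]
  simp_rw [h4]
  rw [MeasureTheory.integral_indicator hB]

open Filter

lemma exists_pos_lb {n : ℕ} (b : Fin n → ℝ) (hb : ∀ j, b j ≠ 0) :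
    ∃ m > (0:ℝ), ∀ j, m ≤ |b j| := by
  rcases isEmpty_or_nonempty (Fin n) with hE | hNE
  · exact ⟨1, one_pos, fun j => (hE.elim j)⟩
  · obtain ⟨j₀, -, hj₀⟩ := Finset.exists_min_image Finset.univ (fun j => |b j|)
      ⟨Classical.arbitrary _, Finset.mem_univ _⟩
    exact ⟨|b j₀|, abs_pos.2 (hb j₀), fun j => hj₀ j (Finset.mem_univ j)⟩

lemma key_L1 {n : ℕ} (g₀ : (Fin n → ℝ) → ℝ) (hg₀m : Measurable g₀)
    (hg₀int : Integrable g₀ volume)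
    (b : Fin n → ℝ) (hb : ∀ j, b j ≠ 0) {ε : ℝ} (hε : 0 < ε) :
    ∀ᶠ a in nhds b, (∀ j, a j ≠ 0) ∧
      ∫ y : Fin n → ℝ, |(∏ j, |a j|)⁻¹ * g₀ (fun j => y j / a j)
        - (∏ j, |b j|)⁻¹ * g₀ (fun j => y j / b j)| ∂volume < ε := by
  obtain ⟨h, hhcs, hhapprox, hhcont, hhint⟩ :=
    hg₀int.exists_hasCompactSupport_integral_sub_le (by positivity : (0:ℝ) < ε/4)
  obtain ⟨m, hm0, hmle⟩ := exists_pos_lb b hb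
  obtain ⟨R₀, hR₀⟩ := (Metric.isBounded_iff_subset_closedBall 0).1
    hhcs.isCompact.isBounded
  set R : ℝ := max R₀ 0 with hRdef
  have hR : tsupport h ⊆ Metric.closedBall 0 R :=
    hR₀.trans (Metric.closedBall_subset_closedBall (le_max_left _ _))
  have hR0 : (0:ℝ) ≤ R := le_max_right _ _
  obtain ⟨Ch, hCh⟩ := hhcs.exists_bound_of_continuous hhcont
  have hCh0 : (0:ℝ) ≤ Ch := le_trans (norm_nonneg _) (hCh 0)
  set A : ℝ := ‖b‖ + m with hAdef
  have hA0 : (0:ℝ) < A := by positivity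
  set G : (Fin n → ℝ) → (Fin n → ℝ) → ℝ :=
    fun a y => (∏ j, |a j|)⁻¹ * g₀ (fun j => y j / a j) with hGdef
  set H : (Fin n → ℝ) → (Fin n → ℝ) → ℝ :=
    fun a y => (∏ j, |a j|)⁻¹ * h (fun j => y j / a j) with hHdef
  set C : ℝ := ((m/2)^n)⁻¹ * Ch with hCdef
  set K : Set (Fin n → ℝ) := Metric.closedBall 0 (A * R) with hKdef
  -- properties of a near b
  have hnear : ∀ a : Fin n → ℝ, dist a b < m/2 →
      (∀ j, m/2 ≤ |a j| ∧ |a j| ≤ A) := by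
    intro a hd j
    have hdj : |a j - b j| ≤ dist a b := by
      rw [← Real.dist_eq]; exact dist_le_pi_dist a b j
    constructor
    · have : |b j| - |a j| ≤ |a j - b j| := by
        rw [abs_sub_comm]; exact abs_sub_abs_le_abs_sub _ _
      nlinarith [hmle j]
    · have h1 : |a j| - |b j| ≤ |a j - b j| := abs_sub_abs_le_abs_sub _ _
      have h2 : |b j| ≤ ‖b‖ := by
        simpa [Real.norm_eq_abs] using norm_le_pi_norm b j
      simp only [hAdef]
      nlinarith
  -- bound on H for a near b
  have hHbound : ∀ a : Fin n → ℝ, dist a b < m/2 → ∀ y : Fin n → ℝ,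
      |H a y| ≤ Set.indicator K (fun _ => C) y := by
    intro a hd y
    have hne : ∀ j, a j ≠ 0 := fun j => by
      have := (hnear a hd j).1; intro hc; rw [hc, abs_zero] at this; linarith
    have hprod : (m/2)^n ≤ ∏ j, |a j| := by
      calc (m/2)^n = ∏ _j : Fin n, (m/2) := by
            rw [Finset.prod_const, Finset.card_univ, Fintype.card_fin]
        _ ≤ ∏ j, |a j| :=
            Finset.prod_le_prod (fun _ _ => by positivity)
              (fun j _ => (hnear a hd j).1)
    have hcpos : (0:ℝ) < (m/2)^n := by positivity
    have hinv : (∏ j, |a j|)⁻¹ ≤ ((m/2)^n)⁻¹ :=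
      inv_anti₀ hcpos hprod
    by_cases hy : y ∈ K
    · rw [Set.indicator_of_mem hy]
      have : |H a y| ≤ (∏ j, |a j|)⁻¹ * Ch := by
        rw [hHdef]
        simp only []
        rw [abs_mul, abs_inv, abs_of_nonneg (Finset.prod_nonneg fun j _ => abs_nonneg _)]
        exact mul_le_mul_of_nonneg_left
          (by simpa [Real.norm_eq_abs] using hCh (fun j => y j / a j))
          (by positivity)
      refine this.trans ?_
      exact mul_le_mul_of_nonneg_right hinv hCh0
    · rw [Set.indicator_of_notMem hy]
      have hyK : A * R < ‖y‖ := by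
        by_contra hc
        exact hy (by simpa [hKdef, Metric.mem_closedBall, dist_zero_right] using not_lt.1 hc)
      obtain ⟨j, hj⟩ : ∃ j, A * R < |y j| := by
        by_contra hc
        push_neg at hc
        have : ‖y‖ ≤ A * R := by
          refine pi_norm_le_iff_of_nonneg (by positivity) |>.2 fun j => ?_
          simpa [Real.norm_eq_abs] using hc j
        linarith
      have hAj : |a j| ≤ A := (hnear a hd j).2
      have haj0 : (0:ℝ) < |a j| := lt_of_lt_of_le (by linarith) (hnear a hd j).1
      have hout : (fun j => y j / a j) ∉ tsupport h := by
        intro hmem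
        have := hR hmem
        rw [Metric.mem_closedBall, dist_zero_right] at this
        have h1 : |y j| / |a j| ≤ R := by
          have := (norm_le_pi_norm (fun k => y k / a k) j).trans this
          simpa [Real.norm_eq_abs, abs_div] using this
        have h2 : |y j| ≤ R * |a j| := by
          calc |y j| = |y j| / |a j| * |a j| := by field_simp
            _ ≤ R * |a j| := mul_le_mul_of_nonneg_right h1 (le_of_lt haj0)
        have h3 : R * |a j| ≤ R * A := mul_le_mul_of_nonneg_left hAj hR0
        nlinarith
      have : h (fun j => y j / a j) = 0 := image_eq_zero_of_notMem_tsupport hout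
      rw [hHdef]
      simp only []
      rw [this, mul_zero, abs_zero]
  -- measurability / continuity of H a
  have hHcont : ∀ a : Fin n → ℝ, Continuous (H a) := by
    intro a
    exact continuous_const.mul
      (hhcont.comp (continuous_pi fun j => (continuous_apply j).div_const _))
  -- dominated convergence
  have hdc : Tendsto (fun a => ∫ y : Fin n → ℝ, |H a y - H b y| ∂volume)
      (nhds b) (nhds 0) := by
    have hbb : dist b b < m/2 := by rw [dist_self]; positivity
    have key := MeasureTheory.tendsto_integral_filter_of_dominated_convergence
      (μ := (volume : Measure (Fin n → ℝ))) (l := nhds b)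
      (F := fun a y => |H a y - H b y|) (f := fun _ => (0:ℝ))
      (bound := Set.indicator K (fun _ => 2*C))
      (Filter.Eventually.of_forall fun a =>
        (((hHcont a).sub (hHcont b)).abs).aestronglyMeasurable)
      ?_ ?_ ?_
    · simpa using key
    · filter_upwards [Metric.ball_mem_nhds b (half_pos hm0)] with a hd
      refine ae_of_all _ fun y => ?_
      have hd' : dist a b < m/2 := by rwa [Metric.mem_ball] at hd
      have h1 := hHbound a hd' y
      have h2 := hHbound b hbb y
      have habs : |H a y - H b y| ≤ |H a y| + |H b y| := abs_sub _ _
      have hsplit : Set.indicator K (fun _ => 2*C) y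
          = Set.indicator K (fun _ => C) y + Set.indicator K (fun _ => C) y := by
        by_cases hy : y ∈ K <;> simp [hy] <;> ring
      rw [Real.norm_eq_abs, abs_abs, hsplit]
      linarith
    · refine (integrable_indicator_iff Metric.isClosed_closedBall.measurableSet).2 ?_
      exact integrableOn_const (measure_closedBall_lt_top).ne
    · refine ae_of_all _ fun y => ?_
      have hprodb : (0:ℝ) < ∏ j, |b j| := Finset.prod_pos fun j _ => abs_pos.2 (hb j)
      have c1 : ContinuousAt (fun a : Fin n → ℝ => (∏ j, |a j|)⁻¹) b := by
        have hcp : Continuous (fun a : Fin n → ℝ => ∏ j, |a j|) :=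
          continuous_finset_prod _ (fun j _ => (continuous_apply j).abs)
        exact hcp.continuousAt.inv₀ (ne_of_gt hprodb)
      have c2 : ContinuousAt (fun a : Fin n → ℝ => h (fun j => y j / a j)) b := by
        refine hhcont.continuousAt.comp ?_
        exact continuousAt_pi.2 fun j => continuousAt_const.div (continuous_apply j).continuousAt (hb j)
      have hc : ContinuousAt (fun a => H a y) b := c1.mul c2
      have := (hc.tendsto.sub (tendsto_const_nhds (x := H b y))).abs
      simpa using this
  -- assemble
  have hmeas_gh : AEStronglyMeasurable (fun x => |g₀ x - h x|) (volume : Measure (Fin n → ℝ)) :=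
    ((hg₀m.sub hhcont.measurable).abs).aestronglyMeasurable
  filter_upwards [Metric.ball_mem_nhds b (half_pos hm0),
    hdc.eventually_lt_const (by positivity : (0:ℝ) < ε/4)] with a hd hint
  have hd' : dist a b < m/2 := by rwa [Metric.mem_ball] at hd
  have ha : ∀ j, a j ≠ 0 := fun j => by
    have := (hnear a hd' j).1; intro hc; rw [hc, abs_zero] at this; linarith
  refine ⟨ha, ?_⟩
  have hprodnn : ∀ c : Fin n → ℝ, (0:ℝ) ≤ ∏ j, |c j| :=
    fun c => Finset.prod_nonneg fun j _ => abs_nonneg _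
  have ediff : ∀ (c : Fin n → ℝ), ∀ y : Fin n → ℝ, |G c y - H c y|
      = (∏ j, |c j|)⁻¹ * |g₀ (fun j => y j / c j) - h (fun j => y j / c j)| := by
    intro c y
    simp only [hGdef, hHdef]
    rw [← mul_sub, abs_mul, abs_inv,
      abs_of_nonneg (hprodnn c)]
  have scI : ∀ (c : Fin n → ℝ), (∀ j, c j ≠ 0) →
      ∫ y : Fin n → ℝ, |G c y - H c y| ∂volume ≤ ε/4 := by
    intro c hc
    have e2 := scale_integral c hc (fun x => |g₀ x - h x|) hmeas_gh
    calc ∫ y : Fin n → ℝ, |G c y - H c y| ∂volume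
        = ∫ y : Fin n → ℝ, (∏ j, |c j|)⁻¹ * |g₀ (fun j => y j / c j)
            - h (fun j => y j / c j)| ∂volume := by simp_rw [ediff]
      _ = ∫ x, |g₀ x - h x| ∂volume := e2
      _ ≤ ε/4 := by simpa [Real.norm_eq_abs] using hhapprox
  have IGa : Integrable (G a) volume := scale_integrable a ha hg₀int
  have IGb : Integrable (G b) volume := scale_integrable b hb hg₀int
  have IHa : Integrable (H a) volume := scale_integrable a ha hhint
  have IHb : Integrable (H b) volume := scale_integrable b hb hhint
  have int1 : Integrable (fun y => |G a y - H a y|) volume := (IGa.sub IHa).abs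
  have int2 : Integrable (fun y => |H a y - H b y|) volume := (IHa.sub IHb).abs
  have int3 : Integrable (fun y => |H b y - G b y|) volume := (IHb.sub IGb).abs
  have int23 : Integrable (fun y => |H a y - H b y| + |H b y - G b y|) volume :=
    int2.add int3
  have intall : Integrable (fun y => |G a y - H a y| + (|H a y - H b y| + |H b y - G b y|)) volume :=
    int1.add int23
  have tri : ∀ y : Fin n → ℝ, |G a y - G b y|
      ≤ |G a y - H a y| + (|H a y - H b y| + |H b y - G b y|) := by
    intro y
    have t1 := abs_sub_le (G a y) (H a y) (G b y)
    have t2 := abs_sub_le (H a y) (H b y) (G b y)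
    linarith
  have e3 : ∫ y : Fin n → ℝ, |H b y - G b y| ∂volume
      = ∫ y : Fin n → ℝ, |G b y - H b y| ∂volume := by
    simp_rw [abs_sub_comm (H b _) (G b _)]
  calc ∫ y : Fin n → ℝ, |G a y - G b y| ∂volume
      ≤ ∫ y : Fin n → ℝ, (|G a y - H a y| + (|H a y - H b y| + |H b y - G b y|)) ∂volume :=
        integral_mono ((IGa.sub IGb).abs) intall tri
    _ = (∫ y : Fin n → ℝ, |G a y - H a y| ∂volume)
        + ((∫ y : Fin n → ℝ, |H a y - H b y| ∂volume)
          + (∫ y : Fin n → ℝ, |H b y - G b y| ∂volume)) := by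
        rw [integral_add int1 int23, integral_add int2 int3]
    _ < ε := by
        have s1 := scI a ha
        have s3 := scI b hb
        rw [e3]
        linarith


/-- Continuity in total variation for multiplicative noise: if `f` is continuous with
nonvanishing coordinates and `p ≪ λⁿ`, then the distribution of the coordinatewise
product `diag(ξ) f(s₂)` (with `ξ ∼ p`) depends continuously on `s₂` in total
variation. -/
theorem multiplicative_noise_continuous_in_total_variation
    (S₂ : Type*) [MetricSpace S₂] (n : ℕ)
    (f : S₂ → (Fin n → ℝ)) (hf : Continuous f)
    (hf_ne : ∀ (s₂ : S₂) (j : Fin n), f s₂ j ≠ 0)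
    (p : Measure (Fin n → ℝ)) [IsProbabilityMeasure p]
    (hp : p ≪ (volume : Measure (Fin n → ℝ))) :
    ∀ s₂ : S₂, ∀ ε > (0 : ℝ), ∃ δ > (0 : ℝ), ∀ s₂' : S₂, dist s₂' s₂ < δ →
      ∀ B : Set (Fin n → ℝ), MeasurableSet B →
        |((p.map (fun ξ => fun j => ξ j * f s₂' j)) B).toReal
          - ((p.map (fun ξ => fun j => ξ j * f s₂ j)) B).toReal| < ε := by
  intro s₂ ε hε
  have hb : ∀ j, f s₂ j ≠ 0 := hf_ne s₂
  have hg₀m : Measurable (fun x => (p.rnDeriv volume x).toReal) :=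
    (Measure.measurable_rnDeriv _ _).ennreal_toReal
  have hg₀int : Integrable (fun x => (p.rnDeriv volume x).toReal) volume :=
    Measure.integrable_toReal_rnDeriv
  have hkey := key_L1 (fun x => (p.rnDeriv volume x).toReal) hg₀m hg₀int (f s₂) hb hε
  have hQ : ∀ᶠ a in nhds (f s₂), ∀ B : Set (Fin n → ℝ), MeasurableSet B →
      |((p.map (fun ξ => fun j => ξ j * a j)) B).toReal
        - ((p.map (fun ξ => fun j => ξ j * f s₂ j)) B).toReal| < ε := by
    filter_upwards [hkey] with a hpair
    obtain ⟨ha, hL1⟩ := hpair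
    intro B hB
    rw [map_apply_eq_integral p hp a ha B hB, map_apply_eq_integral p hp (f s₂) hb B hB]
    set Ga : (Fin n → ℝ) → ℝ :=
      fun y => (∏ j, |a j|)⁻¹ * (p.rnDeriv volume (fun j => y j / a j)).toReal with hGa
    set Gb : (Fin n → ℝ) → ℝ :=
      fun y => (∏ j, |f s₂ j|)⁻¹ * (p.rnDeriv volume (fun j => y j / f s₂ j)).toReal with hGb
    have IGa : Integrable Ga volume := scale_integrable a ha hg₀int
    have IGb : Integrable Gb volume := scale_integrable (f s₂) hb hg₀int
    have h1 : (∫ y in B, Ga y ∂volume) - ∫ y in B, Gb y ∂volume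
        = ∫ y in B, (Ga y - Gb y) ∂volume :=
      (integral_sub IGa.integrableOn IGb.integrableOn).symm
    rw [h1]
    calc |∫ y in B, (Ga y - Gb y) ∂volume|
        ≤ ∫ y in B, |Ga y - Gb y| ∂volume := by
          simpa [Real.norm_eq_abs] using
            norm_integral_le_integral_norm (μ := (volume : Measure (Fin n → ℝ)).restrict B)
              (fun y => Ga y - Gb y)
      _ ≤ ∫ y, |Ga y - Gb y| ∂volume :=
          setIntegral_le_integral ((IGa.sub IGb).abs) (ae_of_all _ fun y => abs_nonneg _)
      _ < ε := hL1
  have := (hf.tendsto s₂).eventually hQ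
  rw [Metric.eventually_nhds_iff] at this
  obtain ⟨δ, hδ, hδ'⟩ := this
  exact ⟨δ, hδ, fun s₂' hd B hB => hδ' hd B hB⟩
end

section
/- A semi-uniform Feller transition probability is weakly continuous: let S₁, S₂, S₃ be metric spaces and Ψ a transition probability from S₃ to S₁ × S₂ such that for every sequence s₃ⁿ → s₃ and every bounded continuous f on S₁, sup_{B Borel in S₂} |∫_{S₁} f(s₁) Ψ(ds₁, B | s₃ⁿ) − ∫_{S₁} f(s₁) Ψ(ds₁, B | s₃)| → 0. Then Ψ is weakly continuous: for every bounded continuous g on S₁ × S₂ of the product form g(s₁,s₂) = f(s₁)h(s₂) with h bounded continuous, and more generally for every bounded continuous g, ∫ g dΨ(·|s₃ⁿ) → ∫ g dΨ(·|s₃). -/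
open MeasureTheory ProbabilityTheory Filter Topology

section AuxSUF

variable {S₁ S₂ : Type*}
  [MetricSpace S₁] [MeasurableSpace S₁] [BorelSpace S₁]
  [MetricSpace S₂] [MeasurableSpace S₂] [BorelSpace S₂]

private lemma suf_integrable {μ : Measure (S₁ × S₂)} [IsFiniteMeasure μ]
    {g : S₁ → ℝ} (hg : Measurable g) {C : ℝ} (hC : ∀ x, |g x| ≤ C)
    {B : Set S₂} (hB : MeasurableSet B) :
    Integrable (fun q : S₁ × S₂ => g q.1 * B.indicator (fun _ => (1:ℝ)) q.2) μ := by
  refine Integrable.mono' (integrable_const C) ?_ (Filter.Eventually.of_forall fun q => ?_)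
  · exact ((hg.comp measurable_fst).mul
      ((measurable_const.indicator hB).comp measurable_snd)).aestronglyMeasurable
  · rw [norm_mul]
    have h1 : ‖g q.1‖ ≤ C := hC q.1
    have h2 : ‖B.indicator (fun _ => (1:ℝ)) q.2‖ ≤ 1 := by
      by_cases h : q.2 ∈ B <;> simp [Set.indicator_apply, h]
    calc ‖g q.1‖ * ‖B.indicator (fun _ => (1:ℝ)) q.2‖
        ≤ C * 1 := mul_le_mul h1 h2 (norm_nonneg _) ((norm_nonneg _).trans h1)
      _ = C := mul_one _

private lemma suf_integral_prod_indicator {μ : Measure (S₁ × S₂)} [IsFiniteMeasure μ]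
    {A : Set S₁} (hA : MeasurableSet A) {B : Set S₂} (hB : MeasurableSet B) :
    ∫ q : S₁ × S₂, A.indicator (fun _ => (1:ℝ)) q.1 * B.indicator (fun _ => (1:ℝ)) q.2 ∂μ
      = (μ (A ×ˢ B)).toReal := by
  rw [← Measure.real_def, ← integral_indicator_one (hA.prod hB)]
  apply integral_congr_ae
  refine Filter.Eventually.of_forall fun q => ?_
  by_cases h1 : q.1 ∈ A <;> by_cases h2 : q.2 ∈ B <;>
    simp [Set.indicator_apply, h1, h2, Set.mem_prod]

/-- Continuous approximation to the indicator of a closed set from above. -/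
private noncomputable def closedApprox (F : Set S₁) (k : ℕ) :
    BoundedContinuousFunction S₁ ℝ :=
  BoundedContinuousFunction.mkOfBound
    ⟨fun x => max (1 - (k + 1 : ℝ) * Metric.infDist x F) 0, by
      exact (continuous_const.sub (continuous_const.mul
        (Metric.continuous_infDist_pt F))).max continuous_const⟩ 2
    (by
      intro x y
      have hx0 : (0:ℝ) ≤ max (1 - (k + 1 : ℝ) * Metric.infDist x F) 0 := le_max_right _ _
      have hy0 : (0:ℝ) ≤ max (1 - (k + 1 : ℝ) * Metric.infDist y F) 0 := le_max_right _ _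
      have hx1 : max (1 - (k + 1 : ℝ) * Metric.infDist x F) 0 ≤ 1 := by
        apply max_le _ zero_le_one
        nlinarith [Metric.infDist_nonneg (x := x) (s := F)]
      have hy1 : max (1 - (k + 1 : ℝ) * Metric.infDist y F) 0 ≤ 1 := by
        apply max_le _ zero_le_one
        nlinarith [Metric.infDist_nonneg (x := y) (s := F)]
      rw [Real.dist_eq]
      rw [abs_le]
      constructor <;> simp only [ContinuousMap.coe_mk] <;> linarith)

private lemma closedApprox_nonneg (F : Set S₁) (k : ℕ) (x : S₁) :
    0 ≤ closedApprox F k x := le_max_right _ _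

private lemma closedApprox_le_one (F : Set S₁) (k : ℕ) (x : S₁) :
    closedApprox F k x ≤ 1 := by
  apply max_le _ zero_le_one
  nlinarith [Metric.infDist_nonneg (x := x) (s := F)]

private lemma closedApprox_indicator_le (F : Set S₁) (k : ℕ) (x : S₁) :
    F.indicator (fun _ => (1:ℝ)) x ≤ closedApprox F k x := by
  by_cases hx : x ∈ F
  · have : Metric.infDist x F = 0 := Metric.infDist_zero_of_mem hx
    simp [Set.indicator_apply, hx, closedApprox, this]
  · simp [Set.indicator_apply, hx, closedApprox_nonneg]

private lemma closedApprox_tendsto {F : Set S₁} (hF : IsClosed F) (hFne : F.Nonempty)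
    (x : S₁) :
    Tendsto (fun k => closedApprox F k x) atTop
      (𝓝 (F.indicator (fun _ => (1:ℝ)) x)) := by
  by_cases hx : x ∈ F
  · have hone : ∀ k, closedApprox F k x = 1 := fun k => by
      have : Metric.infDist x F = 0 := Metric.infDist_zero_of_mem hx
      simp [closedApprox, this]
    rw [Set.indicator_of_mem hx]
    have : (fun k => closedApprox F k x) = fun _ => (1:ℝ) := funext hone
    rw [this]
    exact tendsto_const_nhds
  · have hd : 0 < Metric.infDist x F := (hF.notMem_iff_infDist_pos hFne).mp hx
    have hev : ∀ᶠ k : ℕ in atTop, closedApprox F k x = 0 := by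
      obtain ⟨N, hN⟩ := exists_nat_ge (1 / Metric.infDist x F)
      filter_upwards [eventually_ge_atTop N] with k hk
      have h1 : 1 / Metric.infDist x F ≤ (k : ℝ) := hN.trans (by exact_mod_cast hk)
      have h2 : 1 ≤ (k : ℝ) * Metric.infDist x F := by
        rw [div_le_iff₀ hd] at h1; linarith
      have h3 : 1 - (k + 1 : ℝ) * Metric.infDist x F ≤ 0 := by nlinarith
      show max (1 - (k + 1 : ℝ) * Metric.infDist x F) 0 = 0
      exact max_eq_right h3
    rw [Set.indicator_of_notMem hx]
    exact Tendsto.congr' (hev.mono fun k hk => hk.symm) tendsto_const_nhds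

variable {μ : Measure (S₁ × S₂)} {μs : ℕ → Measure (S₁ × S₂)}
  [IsProbabilityMeasure μ] [∀ n, IsProbabilityMeasure (μs n)]

private lemma suf_closed
    (H : ∀ f : BoundedContinuousFunction S₁ ℝ, ∀ ε > (0 : ℝ), ∃ N : ℕ, ∀ n ≥ N,
        ∀ B : Set S₂, MeasurableSet B →
          |(∫ q, f q.1 * B.indicator (fun _ => (1 : ℝ)) q.2 ∂(μs n))
            - (∫ q, f q.1 * B.indicator (fun _ => (1 : ℝ)) q.2 ∂μ)| < ε)
    {F : Set S₁} (hF : IsClosed F) {B : Set S₂} (hB : MeasurableSet B)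
    {ε : ℝ} (hε : 0 < ε) :
    ∃ N : ℕ, ∀ n ≥ N, (μs n (F ×ˢ B)).toReal ≤ (μ (F ×ˢ B)).toReal + ε := by
  rcases F.eq_empty_or_nonempty with rfl | hFne
  · refine ⟨0, fun n _ => ?_⟩
    simp only [Set.empty_prod, measure_empty, ENNReal.toReal_zero]
    positivity
  · -- dominated convergence for the limiting measure
    have hcont : ∀ k, Tendsto (fun n => ∫ q : S₁ × S₂,
        (closedApprox F k) q.1 * B.indicator (fun _ => (1:ℝ)) q.2 ∂(μs n)) atTop
        (𝓝 (∫ q : S₁ × S₂,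
          (closedApprox F k) q.1 * B.indicator (fun _ => (1:ℝ)) q.2 ∂μ)) := by
      intro k
      rw [Metric.tendsto_atTop]
      intro δ hδ
      obtain ⟨N, hN⟩ := H (closedApprox F k) δ hδ
      exact ⟨N, fun n hn => by
        rw [Real.dist_eq]; exact hN n hn B hB⟩
    have hdct : Tendsto (fun k => ∫ q : S₁ × S₂,
        (closedApprox F k) q.1 * B.indicator (fun _ => (1:ℝ)) q.2 ∂μ) atTop
        (𝓝 ((μ (F ×ˢ B)).toReal)) := by
      rw [← suf_integral_prod_indicator hF.measurableSet hB]
      apply tendsto_integral_of_dominated_convergence (fun _ => (1:ℝ))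
      · intro k
        exact (((closedApprox F k).continuous.measurable.comp measurable_fst).mul
          ((measurable_const.indicator hB).comp measurable_snd)).aestronglyMeasurable
      · exact integrable_const 1
      · intro k
        refine Filter.Eventually.of_forall fun q => ?_
        rw [norm_mul]
        have h1 : ‖(closedApprox F k) q.1‖ ≤ 1 := by
          rw [Real.norm_eq_abs, abs_le]
          exact ⟨by linarith [closedApprox_nonneg F k q.1], closedApprox_le_one F k q.1⟩
        have h2 : ‖B.indicator (fun _ => (1:ℝ)) q.2‖ ≤ 1 := by
          by_cases h : q.2 ∈ B <;> simp [Set.indicator_apply, h]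
        calc ‖(closedApprox F k) q.1‖ * ‖B.indicator (fun _ => (1:ℝ)) q.2‖
            ≤ 1 * 1 := mul_le_mul h1 h2 (norm_nonneg _) zero_le_one
          _ = 1 := mul_one _
      · refine Filter.Eventually.of_forall fun q => ?_
        exact (closedApprox_tendsto hF hFne q.1).mul_const _
    obtain ⟨k, hk⟩ := (hdct.eventually
      (gt_mem_nhds (lt_add_of_pos_right _ (half_pos hε)))).exists
    obtain ⟨N, hN⟩ := H (closedApprox F k) (ε / 2) (half_pos hε)
    refine ⟨N, fun n hn => ?_⟩
    have hmono : (μs n (F ×ˢ B)).toReal ≤ ∫ q : S₁ × S₂,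
        (closedApprox F k) q.1 * B.indicator (fun _ => (1:ℝ)) q.2 ∂(μs n) := by
      rw [← suf_integral_prod_indicator hF.measurableSet hB]
      apply integral_mono
      · exact suf_integrable (measurable_const.indicator hF.measurableSet)
          (C := 1) (fun x => by by_cases h : x ∈ F <;> simp [Set.indicator_apply, h]) hB
      · exact suf_integrable (closedApprox F k).continuous.measurable
          (C := max 1 ‖closedApprox F k‖)
          (fun x => ((closedApprox F k).norm_coe_le_norm x).trans (le_max_right _ _)) hB
      · intro q
        apply mul_le_mul_of_nonneg_right (closedApprox_indicator_le F k q.1)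
        by_cases h : q.2 ∈ B <;> simp [Set.indicator_apply, h]
    have habs := hN n hn B hB
    have h2 := (abs_lt.mp habs).2
    linarith

private lemma suf_univ_slice
    (H : ∀ f : BoundedContinuousFunction S₁ ℝ, ∀ ε > (0 : ℝ), ∃ N : ℕ, ∀ n ≥ N,
        ∀ B : Set S₂, MeasurableSet B →
          |(∫ q, f q.1 * B.indicator (fun _ => (1 : ℝ)) q.2 ∂(μs n))
            - (∫ q, f q.1 * B.indicator (fun _ => (1 : ℝ)) q.2 ∂μ)| < ε)
    {B : Set S₂} (hB : MeasurableSet B) {ε : ℝ} (hε : 0 < ε) :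
    ∃ N : ℕ, ∀ n ≥ N,
      |(μs n (Set.univ ×ˢ B)).toReal - (μ (Set.univ ×ˢ B)).toReal| < ε := by
  obtain ⟨N, hN⟩ := H 1 ε hε
  refine ⟨N, fun n hn => ?_⟩
  have key : ∀ (ν : Measure (S₁ × S₂)) [IsProbabilityMeasure ν],
      ∫ q : S₁ × S₂, (1 : BoundedContinuousFunction S₁ ℝ) q.1 *
        B.indicator (fun _ => (1:ℝ)) q.2 ∂ν = (ν (Set.univ ×ˢ B)).toReal := by
    intro ν _
    rw [← suf_integral_prod_indicator MeasurableSet.univ hB]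
    apply integral_congr_ae
    refine Filter.Eventually.of_forall fun q => ?_
    simp [Set.indicator_apply]
  have := hN n hn B hB
  rwa [key (μs n), key μ] at this

private lemma suf_disjoint_prod {U : Set S₁} {B : Set S₂} :
    Disjoint (U ×ˢ B) (Uᶜ ×ˢ B) := by
  rw [Set.disjoint_left]
  rintro ⟨x, y⟩ ⟨hx, -⟩ ⟨hx', -⟩
  exact hx' hx

private lemma suf_decomp (ν : Measure (S₁ × S₂)) [IsProbabilityMeasure ν]
    {U : Set S₁} (hU : MeasurableSet U) {B : Set S₂} (hB : MeasurableSet B) :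
    (ν (U ×ˢ B)).toReal = (ν (Set.univ ×ˢ B)).toReal - (ν (Uᶜ ×ˢ B)).toReal := by
  have h : ν (Set.univ ×ˢ B) = ν (U ×ˢ B) + ν (Uᶜ ×ˢ B) := by
    rw [← measure_union suf_disjoint_prod (hU.compl.prod hB), ← Set.union_prod,
      Set.union_compl_self]
  rw [h, ENNReal.toReal_add (measure_ne_top _ _) (measure_ne_top _ _)]
  ring

private lemma suf_rect
    (H : ∀ f : BoundedContinuousFunction S₁ ℝ, ∀ ε > (0 : ℝ), ∃ N : ℕ, ∀ n ≥ N,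
        ∀ B : Set S₂, MeasurableSet B →
          |(∫ q, f q.1 * B.indicator (fun _ => (1 : ℝ)) q.2 ∂(μs n))
            - (∫ q, f q.1 * B.indicator (fun _ => (1 : ℝ)) q.2 ∂μ)| < ε)
    {U : Set S₁} (hU : IsOpen U) {B : Set S₂} (hB : MeasurableSet B)
    {ε : ℝ} (hε : 0 < ε) :
    ∃ N : ℕ, ∀ n ≥ N, (μ (U ×ˢ B)).toReal ≤ (μs n (U ×ˢ B)).toReal + ε := by
  obtain ⟨N₁, hN₁⟩ := suf_univ_slice H hB (half_pos hε)
  obtain ⟨N₂, hN₂⟩ := suf_closed H hU.isClosed_compl hB (half_pos hε)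
  refine ⟨max N₁ N₂, fun n hn => ?_⟩
  have h1 := hN₁ n (le_of_max_le_left hn)
  have h2 := hN₂ n (le_of_max_le_right hn)
  have d1 := suf_decomp μ hU.measurableSet hB
  have d2 := suf_decomp (μs n) hU.measurableSet hB
  have h1' := (abs_lt.mp h1).1
  rw [d1, d2]
  linarith

private lemma suf_measure_add (ν : Measure (S₁ × S₂)) {s t : Set (S₁ × S₂)}
    [IsProbabilityMeasure ν] (hd : Disjoint s t) (ht : MeasurableSet t) :
    (ν (s ∪ t)).toReal = (ν s).toReal + (ν t).toReal := by
  rw [measure_union hd ht, ENNReal.toReal_add (measure_ne_top _ _) (measure_ne_top _ _)]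

private lemma suf_biUnion_cons (p : Set S₁ × Set S₂) (L : List (Set S₁ × Set S₂)) :
    (⋃ q ∈ (p :: L), q.1 ×ˢ q.2) = p.1 ×ˢ p.2 ∪ ⋃ q ∈ L, q.1 ×ˢ q.2 := by
  ext z
  simp only [Set.mem_iUnion, List.mem_cons, Set.mem_union, exists_prop]
  constructor
  · rintro ⟨q, (rfl | hq), hz⟩
    · exact Or.inl hz
    · exact Or.inr ⟨q, hq, hz⟩
  · rintro (hz | ⟨q, hq, hz⟩)
    · exact ⟨p, Or.inl rfl, hz⟩
    · exact ⟨q, Or.inr hq, hz⟩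

private lemma suf_list
    (H : ∀ f : BoundedContinuousFunction S₁ ℝ, ∀ ε > (0 : ℝ), ∃ N : ℕ, ∀ n ≥ N,
        ∀ B : Set S₂, MeasurableSet B →
          |(∫ q, f q.1 * B.indicator (fun _ => (1 : ℝ)) q.2 ∂(μs n))
            - (∫ q, f q.1 * B.indicator (fun _ => (1 : ℝ)) q.2 ∂μ)| < ε)
    (L : List (Set S₁ × Set S₂)) (hL : ∀ p ∈ L, IsOpen p.1 ∧ IsOpen p.2) :
    ∀ (U : Set S₁), IsOpen U → ∀ (B : Set S₂), MeasurableSet B → ∀ ε > (0:ℝ),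
    ∃ N : ℕ, ∀ n ≥ N,
      (μ (((U ×ˢ (Set.univ : Set S₂)) ∪ ⋃ p ∈ L, p.1 ×ˢ p.2) ∩
        ((Set.univ : Set S₁) ×ˢ B))).toReal ≤
      (μs n (((U ×ˢ (Set.univ : Set S₂)) ∪ ⋃ p ∈ L, p.1 ×ˢ p.2) ∩
        ((Set.univ : Set S₁) ×ˢ B))).toReal + ε := by
  induction L with
  | nil =>
    intro U hU B hB ε hε
    have hset : ((U ×ˢ (Set.univ : Set S₂)) ∪
        ⋃ p ∈ ([] : List (Set S₁ × Set S₂)), p.1 ×ˢ p.2) ∩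
        ((Set.univ : Set S₁) ×ˢ B) = U ×ˢ B := by
      ext ⟨x, y⟩
      simp [Set.mem_prod]
    rw [hset]
    exact suf_rect H hU hB hε
  | cons p L' ih =>
    intro U hU B hB ε hε
    have hp1 : IsOpen p.1 := (hL p (List.mem_cons_self)).1
    have hp2 : IsOpen p.2 := (hL p (List.mem_cons_self)).2
    have hL' : ∀ q ∈ L', IsOpen q.1 ∧ IsOpen q.2 :=
      fun q hq => hL q (List.mem_cons_of_mem _ hq)
    have hE'open : IsOpen (⋃ q ∈ L', q.1 ×ˢ q.2) :=
      isOpen_biUnion fun q hq => ((hL' q hq).1).prod ((hL' q hq).2)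
    have key : ((U ×ˢ (Set.univ : Set S₂)) ∪ ⋃ q ∈ (p :: L'), q.1 ×ˢ q.2) ∩
          ((Set.univ : Set S₁) ×ˢ B)
        = ((((U ∪ p.1) ×ˢ (Set.univ : Set S₂)) ∪ ⋃ q ∈ L', q.1 ×ˢ q.2) ∩
            ((Set.univ : Set S₁) ×ˢ (B ∩ p.2))) ∪
          (((U ×ˢ (Set.univ : Set S₂)) ∪ ⋃ q ∈ L', q.1 ×ˢ q.2) ∩
            ((Set.univ : Set S₁) ×ˢ (B \ p.2))) := by
      rw [suf_biUnion_cons]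
      ext ⟨x, y⟩
      by_cases hy : y ∈ p.2 <;>
        simp only [Set.mem_inter_iff, Set.mem_union, Set.mem_prod, Set.mem_univ,
          Set.mem_diff, true_and, and_true, hy, not_true, not_false_iff,
          and_false, and_true, false_or, or_false] <;>
        tauto
    have hd : Disjoint
        ((((U ∪ p.1) ×ˢ (Set.univ : Set S₂)) ∪ ⋃ q ∈ L', q.1 ×ˢ q.2) ∩
            ((Set.univ : Set S₁) ×ˢ (B ∩ p.2)))
        (((U ×ˢ (Set.univ : Set S₂)) ∪ ⋃ q ∈ L', q.1 ×ˢ q.2) ∩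
            ((Set.univ : Set S₁) ×ˢ (B \ p.2))) := by
      rw [Set.disjoint_left]
      rintro ⟨x, y⟩ ⟨-, -, hy1⟩ ⟨-, -, hy2⟩
      exact hy2.2 hy1.2
    have hm2 : MeasurableSet (((U ×ˢ (Set.univ : Set S₂)) ∪ ⋃ q ∈ L', q.1 ×ˢ q.2) ∩
        ((Set.univ : Set S₁) ×ˢ (B \ p.2))) :=
      (((hU.measurableSet.prod MeasurableSet.univ).union
        (MeasurableSet.biUnion L'.finite_toSet.countable
          (fun q hq => ((hL' q hq).1.measurableSet.prod (hL' q hq).2.measurableSet)))).inter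
        (MeasurableSet.univ.prod (hB.diff hp2.measurableSet)))
    obtain ⟨N₁, hN₁⟩ := ih hL' (U ∪ p.1) (hU.union hp1) (B ∩ p.2)
      (hB.inter hp2.measurableSet) (ε / 2) (half_pos hε)
    obtain ⟨N₂, hN₂⟩ := ih hL' U hU (B \ p.2) (hB.diff hp2.measurableSet)
      (ε / 2) (half_pos hε)
    refine ⟨max N₁ N₂, fun n hn => ?_⟩
    have e1 := suf_measure_add μ hd hm2
    have e2 := suf_measure_add (μs n) hd hm2
    rw [key, e1, e2]
    have := hN₁ n (le_of_max_le_left hn)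
    have := hN₂ n (le_of_max_le_right hn)
    linarith

end AuxSUF

/-- A semi-uniform Feller transition probability is weakly continuous: if for every
convergent sequence `s₃ⁿ → s₃` and every bounded continuous `f` on `S₁` the integrals
`∫ f(s₁) Ψ(ds₁, B | s₃ⁿ)` converge uniformly in the Borel set `B ⊆ S₂`, then for every
bounded continuous `g` on `S₁ × S₂`, `∫ g dΨ(·|s₃ⁿ) → ∫ g dΨ(·|s₃)`. -/
theorem semi_uniform_feller_implies_weakly_continuous
    (S₁ S₂ S₃ : Type*)
    [MetricSpace S₁] [MeasurableSpace S₁] [BorelSpace S₁] [TopologicalSpace.SeparableSpace S₁]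
    [MetricSpace S₂] [MeasurableSpace S₂] [BorelSpace S₂] [TopologicalSpace.SeparableSpace S₂]
    [MetricSpace S₃] [MeasurableSpace S₃] [BorelSpace S₃]
    (Ψ : Kernel S₃ (S₁ × S₂)) [IsMarkovKernel Ψ]
    (hsuf : ∀ (s : ℕ → S₃) (s₃ : S₃), Tendsto s atTop (nhds s₃) →
      ∀ f : BoundedContinuousFunction S₁ ℝ, ∀ ε > (0 : ℝ), ∃ N : ℕ, ∀ n ≥ N,
        ∀ B : Set S₂, MeasurableSet B →
          |(∫ q, f q.1 * B.indicator (fun _ => (1 : ℝ)) q.2 ∂(Ψ (s n)))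
            - (∫ q, f q.1 * B.indicator (fun _ => (1 : ℝ)) q.2 ∂(Ψ s₃))| < ε) :
    ∀ (s : ℕ → S₃) (s₃ : S₃), Tendsto s atTop (nhds s₃) →
      ∀ g : BoundedContinuousFunction (S₁ × S₂) ℝ,
        Tendsto (fun n => ∫ q, g q ∂(Ψ (s n))) atTop
          (nhds (∫ q, g q ∂(Ψ s₃))) := by
  intro s s₃ hs g
  haveI : SecondCountableTopology S₁ := UniformSpace.secondCountable_of_separable S₁
  haveI : SecondCountableTopology S₂ := UniformSpace.secondCountable_of_separable S₂
  have H := hsuf s s₃ hs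
  apply BoundedContinuousFunction.tendsto_integral_of_forall_integral_le_liminf_integral
  intro f f_nn
  apply integral_le_liminf_integral_of_forall_isOpen_measure_le_liminf_measure f_nn
  intro G hG
  -- key liminf inequality for open sets
  set μ := Ψ s₃
  set μs := fun n => Ψ (s n)
  -- real epsilon form for open sets
  have main : ∀ ε > (0:ℝ), ∃ N : ℕ, ∀ n ≥ N,
      (μ G).toReal ≤ (μs n G).toReal + ε := by
    intro ε hε
    -- cover G by countably many open rectangles
    have hcov := fun (q : G) => isOpen_prod_iff.mp hG q.1.1 q.1.2 (by
      simpa using q.2)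
    choose u v hu hv hqu hqv hsub using hcov
    set W : G → Set (S₁ × S₂) := fun q => u q ×ˢ v q with hW
    have hWopen : ∀ q, IsOpen (W q) := fun q => (hu q).prod (hv q)
    have hWG : ⋃ q, W q = G := by
      apply Set.Subset.antisymm
      · exact Set.iUnion_subset fun q => hsub q
      · intro x hx
        exact Set.mem_iUnion.mpr ⟨⟨x, hx⟩, ⟨hqu ⟨x, hx⟩, hqv ⟨x, hx⟩⟩⟩
    obtain ⟨T, hTc, hTU⟩ := TopologicalSpace.isOpen_iUnion_countable W hWopen
    rcases T.eq_empty_or_nonempty with rfl | hTne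
    · -- then G is empty
      have : G = ∅ := by
        rw [← hWG, ← hTU]; simp
      refine ⟨0, fun n _ => ?_⟩
      rw [this]
      simp only [measure_empty, ENNReal.toReal_zero]
      positivity
    · obtain ⟨e, he⟩ := Set.Countable.exists_eq_range hTc hTne
      have hGe : (⋃ k, W (e k)) = G := by
        rw [← hWG, ← hTU, he, Set.biUnion_range]
      set sm : ℕ → Set (S₁ × S₂) := fun m => ⋃ k ∈ Finset.range m, W (e k) with hsm
      have hmono : Monotone sm := fun a b hab =>
        Set.biUnion_subset_biUnion_left (Finset.range_subset_range.mpr hab)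
      have hiU : ⋃ m, sm m = G := by
        rw [← hGe]
        apply Set.Subset.antisymm
        · exact Set.iUnion_subset fun m =>
            Set.iUnion₂_subset fun k _ => Set.subset_iUnion (fun k => W (e k)) k
        · refine Set.iUnion_subset fun k => ?_
          intro x hx
          exact Set.mem_iUnion.mpr ⟨k + 1, Set.mem_biUnion (Finset.mem_range.mpr k.lt_succ_self) hx⟩
      have htend : Tendsto (fun m => (μ (sm m)).toReal) atTop (𝓝 ((μ G).toReal)) := by
        have h1 : Tendsto (fun m => μ (sm m)) atTop (𝓝 (μ G)) := by
          rw [← hiU]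
          exact tendsto_measure_iUnion_atTop hmono
        exact (ENNReal.tendsto_toReal (measure_ne_top μ G)).comp h1
      obtain ⟨m, hm⟩ := (htend.eventually (lt_mem_nhds
        (show (μ G).toReal - ε / 2 < (μ G).toReal by linarith))).exists
      set L : List (Set S₁ × Set S₂) :=
        (List.range m).map (fun k => (u (e k), v (e k))) with hLdef
      have hL : ∀ p ∈ L, IsOpen p.1 ∧ IsOpen p.2 := by
        intro p hp
        rw [hLdef, List.mem_map] at hp
        obtain ⟨k, -, rfl⟩ := hp
        exact ⟨hu (e k), hv (e k)⟩
      have hset : (((∅ : Set S₁) ×ˢ (Set.univ : Set S₂)) ∪ ⋃ p ∈ L, p.1 ×ˢ p.2) ∩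
          ((Set.univ : Set S₁) ×ˢ (Set.univ : Set S₂)) = sm m := by
        ext ⟨x, y⟩
        simp only [Set.mem_inter_iff, Set.mem_union, Set.mem_prod, Set.mem_empty_iff_false,
          Set.mem_univ, and_true, true_and, false_and, false_or, Set.mem_iUnion,
          List.mem_map, List.mem_range, exists_prop, hsm, hW, Finset.mem_range, hLdef]
        constructor
        · rintro ⟨p, ⟨k, hk, rfl⟩, hmem⟩
          exact ⟨k, hk, hmem⟩
        · rintro ⟨k, hk, hmem⟩
          exact ⟨(u (e k), v (e k)), ⟨k, hk, rfl⟩, hmem⟩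
      obtain ⟨N, hN⟩ := suf_list H L hL ∅ isOpen_empty Set.univ MeasurableSet.univ
        (ε / 2) (half_pos hε)
      refine ⟨N, fun n hn => ?_⟩
      have h1 := hN n hn
      rw [hset] at h1
      have hsubG : sm m ⊆ G := by
        rw [← hiU]; exact Set.subset_iUnion sm m
      have h2 : (μs n (sm m)).toReal ≤ (μs n G).toReal :=
        ENNReal.toReal_mono (measure_ne_top _ _) (measure_mono hsubG)
      linarith
  -- convert to ENNReal liminf
  have bound : ∀ n, μs n G ≤ 1 := fun n => prob_le_one
  have hbdd : IsBoundedUnder (· ≤ ·) atTop (fun n => (μs n G).toReal) := by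
    refine isBoundedUnder_of ⟨1, fun n => ?_⟩
    simpa using ENNReal.toReal_mono ENNReal.one_ne_top (bound n)
  have hreal : (μ G).toReal ≤ atTop.liminf (fun n => (μs n G).toReal) := by
    apply le_of_forall_pos_le_add
    intro ε hε
    obtain ⟨N, hN⟩ := main ε hε
    have h : (μ G).toReal - ε ≤ atTop.liminf (fun n => (μs n G).toReal) := by
      apply le_liminf_of_le hbdd.isCoboundedUnder_ge
      refine eventually_atTop.mpr ⟨N, fun n hn => ?_⟩
      linarith [hN n hn]
    linarith
  have heq : atTop.liminf (fun n => (μs n G).toReal)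
      = (atTop.liminf (fun n => μs n G)).toReal :=
    ENNReal.liminf_toReal_eq ENNReal.one_ne_top (Filter.Eventually.of_forall bound)
  rw [heq] at hreal
  have hne : atTop.liminf (fun n => μs n G) ≠ ⊤ := by
    have : atTop.liminf (fun n => μs n G) ≤ 1 := by
      apply liminf_le_of_le
      · isBoundedDefault
      · intro b hb
        obtain ⟨n, hn⟩ := hb.exists
        exact hn.trans (bound n)
    exact (this.trans_lt ENNReal.one_lt_top).ne
  exact (ENNReal.toReal_le_toReal (measure_ne_top μ G) hne).mp hreal
end
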